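/- arXiv:1412.3491 — 5 statements merged into one kernel-verified Lean document; each statement's English description precedes it below -/
import Mathlib

section
/- For any u, v ∈ {1,2}^{ℤ_{>0}}, the map f_{u,v}: X_u → X_v defined by f_{u,v}(0) = 0 and f_{u,v}(x) = (2^{u_n}/2^{v_n})(x - 1/2^n) + 1/2^n for x ∈ I(n, u_n) satisfies (1/2)|x - y| ≤ |f_{u,v}(x) - f_{u,v}(y)| ≤ 2|x - y| for all x, y ∈ X_u. -/
/-- The interval `I(n,m) = [1/2^n, 1/2^n + 1/2^(n+m)]`. -/
def Iset (n m : ℕ) : Set ℝ := Set.Icc ((1:ℝ)/2^n) ((1:ℝ)/2^n + 1/2^(n+m))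

/-- `X_u = {0} ∪ ⋃_{n ≥ 1} I(n, u_n)`, with the Euclidean metric inherited from `ℝ`. -/
def Xset (u : ℕ+ → ℕ) : Set ℝ := {0} ∪ ⋃ n : ℕ+, Iset (n : ℕ) (u n)

/-!
On each interval `I(n, u_n)` the map `f` is affine with slope `2^{u_n} / 2^{v_n} ∈ [1/2, 2]`,
fixes the left endpoint `1/2^n` and maps the interval onto `I(n, v_n)`; this settles pairs of
points in one interval. If `x ∈ I(n, u_n)` and `y` lies in a later interval `I(m, u_m)`, `m > n`,
then `y` and `f y` both lie in `[B, 3B/2]` with `B = 1/2^m ≤ 1/2^{n+1}` (take `B = 0` when `y = 0`),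
and the gap of length at least `B` between `y` and `1/2^n` absorbs the displacement of `y`
under `f`.
-/

open Set

def BiLipAt (f : ℝ → ℝ) (x y : ℝ) : Prop :=
  1 / 2 * |x - y| ≤ |f x - f y| ∧ |f x - f y| ≤ 2 * |x - y|

lemma BiLipAt.symm {f : ℝ → ℝ} {x y : ℝ} (h : BiLipAt f x y) : BiLipAt f y x := by
  rwa [BiLipAt, abs_sub_comm y, abs_sub_comm (f y)]

lemma biLipAt_of_sub_eq_mul {f : ℝ → ℝ} {x y c : ℝ} (hc : c ∈ Icc (1 / 2 : ℝ) 2)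
    (h : f x - f y = c * (x - y)) : BiLipAt f x y := by
  rw [BiLipAt, h, abs_mul, abs_of_nonneg (show 0 ≤ c by linarith [hc.1])]
  exact ⟨mul_le_mul_of_nonneg_right hc.1 (abs_nonneg _),
    mul_le_mul_of_nonneg_right hc.2 (abs_nonneg _)⟩

lemma biLipAt_of_separated {f : ℝ → ℝ} {x y A B c : ℝ} (hB : 0 ≤ B) (hBA : 2 * B ≤ A)
    (hc : c ∈ Icc (1 / 2 : ℝ) 2) (hx : A ≤ x) (hfx : f x - A = c * (x - A))
    (hy : y ∈ Icc B (3 / 2 * B)) (hfy : f y ∈ Icc B (3 / 2 * B)) : BiLipAt f x y := by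
  have hlow : 0 ≤ (c - 1 / 2) * (x - A) := mul_nonneg (by linarith [hc.1]) (by linarith)
  have hup : 0 ≤ (2 - c) * (x - A) := mul_nonneg (by linarith [hc.2]) (by linarith)
  rw [BiLipAt, abs_of_nonneg (by linarith [hy.2] : 0 ≤ x - y),
    abs_of_nonneg (by linarith [hfy.2] : 0 ≤ f x - f y)]
  constructor <;> linarith [hy.1, hy.2, hfy.1, hfy.2]

lemma one_div_two_pow_le_half {n m : ℕ} (h : n < m) : (1 : ℝ) / 2 ^ m ≤ 1 / 2 ^ n / 2 := by
  rw [div_div, ← pow_succ, one_div_le_one_div (by positivity) (by positivity)]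
  exact pow_le_pow_right₀ (by norm_num) h

lemma Iset_subset_Icc {n m : ℕ} (hm : 1 ≤ m) :
    Iset n m ⊆ Icc (1 / 2 ^ n) (3 / 2 * (1 / 2 ^ n)) := by
  rintro x ⟨hx₁, hx₂⟩
  have := one_div_two_pow_le_half (show n < n + m by omega)
  exact ⟨hx₁, by linarith⟩

lemma affine_mem_Iset {n p : ℕ} (q : ℕ) {x : ℝ} (hx : x ∈ Iset n p) :
    (2 : ℝ) ^ p / 2 ^ q * (x - 1 / 2 ^ n) + 1 / 2 ^ n ∈ Iset n q := by
  obtain ⟨hx₁, hx₂⟩ := hx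
  have hlen : (2 : ℝ) ^ p / 2 ^ q * (1 / 2 ^ (n + p)) = 1 / 2 ^ (n + q) := by
    rw [pow_add, pow_add]; field_simp
  have hnonneg : 0 ≤ (2 : ℝ) ^ p / 2 ^ q * (x - 1 / 2 ^ n) :=
    mul_nonneg (by positivity) (by linarith)
  have hle := mul_le_mul_of_nonneg_left (show x - 1 / 2 ^ n ≤ 1 / 2 ^ (n + p) by linarith)
    (by positivity : (0 : ℝ) ≤ 2 ^ p / 2 ^ q)
  exact ⟨by linarith, by linarith⟩

lemma two_pow_div_two_pow_mem_Icc {p q : ℕ} (hp : p = 1 ∨ p = 2) (hq : q = 1 ∨ q = 2) :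
    (2 : ℝ) ^ p / 2 ^ q ∈ Icc (1 / 2 : ℝ) 2 := by
  rcases hp with rfl | rfl <;> rcases hq with rfl | rfl <;> norm_num

section PiecewiseAffine

variable {u v : ℕ+ → ℕ} {f : ℝ → ℝ}

lemma mem_Icc_of_mem_Iset (hu : ∀ n, u n = 1 ∨ u n = 2) (hv : ∀ n, v n = 1 ∨ v n = 2)
    (hfI : ∀ n : ℕ+, ∀ x ∈ Iset (n : ℕ) (u n),
      f x = ((2:ℝ)^(u n) / 2^(v n)) * (x - 1/2^(n:ℕ)) + 1/2^(n:ℕ))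
    {n : ℕ+} {x : ℝ} (hx : x ∈ Iset n (u n)) :
    x ∈ Icc (1 / 2 ^ (n : ℕ)) (3 / 2 * (1 / 2 ^ (n : ℕ))) ∧
      f x ∈ Icc (1 / 2 ^ (n : ℕ)) (3 / 2 * (1 / 2 ^ (n : ℕ))) := by
  have hfx : f x ∈ Iset n (v n) := hfI n x hx ▸ affine_mem_Iset (v n) hx
  exact ⟨Iset_subset_Icc (by rcases hu n with h | h <;> omega) hx,
    Iset_subset_Icc (by rcases hv n with h | h <;> omega) hfx⟩

lemma biLipAt_of_mem_Iset (hu : ∀ n, u n = 1 ∨ u n = 2) (hv : ∀ n, v n = 1 ∨ v n = 2)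
    (hfI : ∀ n : ℕ+, ∀ x ∈ Iset (n : ℕ) (u n),
      f x = ((2:ℝ)^(u n) / 2^(v n)) * (x - 1/2^(n:ℕ)) + 1/2^(n:ℕ))
    {n m : ℕ+} {x y : ℝ} (hx : x ∈ Iset n (u n)) (hy : y ∈ Iset m (u m)) :
    BiLipAt f x y := by
  have hslope := two_pow_div_two_pow_mem_Icc (hu n) (hv n)
  have hfx : f x - 1 / 2 ^ (n : ℕ) = 2 ^ u n / 2 ^ v n * (x - 1 / 2 ^ (n : ℕ)) := by
    rw [hfI n x hx]; ring
  rcases lt_trichotomy n m with h | rfl | h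
  · have hgap := one_div_two_pow_le_half ((PNat.coe_lt_coe n m).2 h)
    obtain ⟨hym, hfym⟩ := mem_Icc_of_mem_Iset hu hv hfI hy
    exact biLipAt_of_separated (by positivity) (by linarith) hslope hx.1 hfx hym hfym
  · exact biLipAt_of_sub_eq_mul hslope (by rw [hfI n x hx, hfI n y hy]; ring)
  · have hgap := one_div_two_pow_le_half ((PNat.coe_lt_coe m n).2 h)
    obtain ⟨hxn, hfxn⟩ := mem_Icc_of_mem_Iset hu hv hfI hx
    have hfy : f y - 1 / 2 ^ (m : ℕ) = 2 ^ u m / 2 ^ v m * (y - 1 / 2 ^ (m : ℕ)) := by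
      rw [hfI m y hy]; ring
    exact (biLipAt_of_separated (by positivity) (by linarith)
      (two_pow_div_two_pow_mem_Icc (hu m) (hv m)) hy.1 hfy hxn hfxn).symm

lemma biLipAt_of_mem_Iset_zero (hu : ∀ n, u n = 1 ∨ u n = 2) (hv : ∀ n, v n = 1 ∨ v n = 2)
    (hf0 : f 0 = 0)
    (hfI : ∀ n : ℕ+, ∀ x ∈ Iset (n : ℕ) (u n),
      f x = ((2:ℝ)^(u n) / 2^(v n)) * (x - 1/2^(n:ℕ)) + 1/2^(n:ℕ))
    {n : ℕ+} {x : ℝ} (hx : x ∈ Iset n (u n)) : BiLipAt f x 0 :=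
  biLipAt_of_separated le_rfl (by rw [mul_zero]; positivity) (two_pow_div_two_pow_mem_Icc (hu n) (hv n)) hx.1
    (by rw [hfI n x hx]; ring) (by simp) (by simp [hf0])

end PiecewiseAffine

/-- The piecewise-affine map `f_{u,v} : X_u → X_v` is bi-Lipschitz with constants `1/2`
and `2`. -/
theorem fuv_biLipschitz (u v : ℕ+ → ℕ) (hu : ∀ n, u n = 1 ∨ u n = 2)
    (hv : ∀ n, v n = 1 ∨ v n = 2) (f : ℝ → ℝ) (hf0 : f 0 = 0)
    (hfI : ∀ n : ℕ+, ∀ x ∈ Iset (n : ℕ) (u n),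
      f x = ((2:ℝ)^(u n) / 2^(v n)) * (x - 1/2^(n:ℕ)) + 1/2^(n:ℕ)) :
    ∀ x ∈ Xset u, ∀ y ∈ Xset u,
      (1/2) * |x - y| ≤ |f x - f y| ∧ |f x - f y| ≤ 2 * |x - y| := by
  intro x hx y hy
  change BiLipAt f x y
  simp only [Xset, mem_union, mem_singleton_iff, mem_iUnion] at hx hy
  rcases hx with rfl | ⟨n, hx⟩ <;> rcases hy with rfl | ⟨m, hy⟩
  · simp [BiLipAt]
  · exact (biLipAt_of_mem_Iset_zero hu hv hf0 hfI hy).symm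
  · exact biLipAt_of_mem_Iset_zero hu hv hf0 hfI hx
  · exact biLipAt_of_mem_Iset hu hv hfI hx hy
end

section
/- For any u, v ∈ {1,2}^{ℤ_{>0}}, the Lipschitz distance between X_u and X_v satisfies d_L(X_u, X_v) ≤ 2 log 2. -/
open ENNReal

/-- The dilation (smallest Lipschitz constant) of a map between metric spaces. -/
noncomputable def dil {X : Type*} {Y : Type*} [MetricSpace X] [MetricSpace Y]
    (f : X → Y) : ℝ :=
  sInf {K : ℝ | ∀ x y : X, dist (f x) (f y) ≤ K * dist x y}

/-- A bijection is a bi-Lipschitz homeomorphism if it and its inverse are Lipschitz. -/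
def IsBiLipschitzEquiv {X : Type*} {Y : Type*} [MetricSpace X] [MetricSpace Y]
    (f : X ≃ Y) : Prop :=
  (∃ K : NNReal, LipschitzWith K f) ∧ (∃ K : NNReal, LipschitzWith K f.symm)

/-- The quantity `|log dil f| + |log dil f⁻¹|`. -/
noncomputable def lipCost {X : Type*} {Y : Type*} [MetricSpace X] [MetricSpace Y]
    (f : X ≃ Y) : ℝ :=
  |Real.log (dil (f : X → Y))| + |Real.log (dil (f.symm : Y → X))|

/-- The Lipschitz distance: the infimum of `|log dil f| + |log dil f⁻¹|` over all
bi-Lipschitz homeomorphisms `f : X → Y` (`∞` if none exists). -/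
noncomputable def lipDist (X : Type*) (Y : Type*) [MetricSpace X] [MetricSpace Y] : ℝ≥0∞ :=
  ⨅ (f : X ≃ Y) (_ : IsBiLipschitzEquiv f), ENNReal.ofReal (lipCost f)

/-!
Map each interval `I(n, u n)` affinely onto `I(n, v n)`, fixing its left end point `2⁻ⁿ`, and
fix `0`. The slopes `2 ^ (u n - v n)` lie in `[1/2, 2]`. Points of different intervals are far
apart compared with the lengths of the intervals: the left end points differ by a factor at least
`2`, while each interval is at most half as long as its left end point. Hence the map and its
inverse are `2`-Lipschitz, so both dilations lie in `[1/2, 2]`.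
-/

open Set

section Dilation

variable {X Y : Type*} [MetricSpace X] [MetricSpace Y]

lemma dil_le_of_lipschitzWith [Nontrivial X] {f : X → Y} {K : NNReal} (hf : LipschitzWith K f) :
    dil f ≤ K := by
  refine csInf_le ⟨0, fun k hk => ?_⟩ hf.dist_le_mul
  obtain ⟨x, y, hxy⟩ := exists_pair_ne X
  exact nonneg_of_mul_nonneg_left (dist_nonneg.trans (hk x y)) (dist_pos.2 hxy)

lemma inv_le_dil_of_lipschitzWith_symm [Nontrivial X] (f : X ≃ Y) {K K' : NNReal} (hK : 0 < K)
    (hf : LipschitzWith K' f) (hg : LipschitzWith K f.symm) : (K : ℝ)⁻¹ ≤ dil f := by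
  refine le_csInf ⟨K', hf.dist_le_mul⟩ fun k hk => ?_
  obtain ⟨x, y, hxy⟩ := exists_pair_ne X
  have hd : 0 < dist x y := dist_pos.2 hxy
  have : dist x y ≤ K * (k * dist x y) := by
    simpa using (hg.dist_le_mul (f x) (f y)).trans (mul_le_mul_of_nonneg_left (hk x y) K.2)
  rw [inv_le_iff_one_le_mul₀ (by exact_mod_cast hK)]
  nlinarith

lemma abs_log_dil_le [Nontrivial X] (f : X ≃ Y) {K : NNReal} (hK : 1 ≤ K)
    (hf : LipschitzWith K f) (hg : LipschitzWith K f.symm) :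
    |Real.log (dil f)| ≤ Real.log K := by
  have hK₀ : (0 : ℝ) < K := by exact_mod_cast zero_lt_one.trans_le hK
  have hlow := inv_le_dil_of_lipschitzWith_symm f (by exact_mod_cast hK₀) hf hg
  have hlog := Real.log_le_log (inv_pos.2 hK₀) hlow
  rw [Real.log_inv] at hlog
  exact abs_le.2 ⟨by linarith,
    Real.log_le_log ((inv_pos.2 hK₀).trans_le hlow) (dil_le_of_lipschitzWith hf)⟩

lemma lipDist_le_of_lipschitzWith [Nontrivial X] (f : X ≃ Y) {K : NNReal} (hK : 1 ≤ K)
    (hf : LipschitzWith K f) (hg : LipschitzWith K f.symm) :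
    lipDist X Y ≤ ENNReal.ofReal (2 * Real.log K) := by
  have : Nontrivial Y := f.symm.nontrivial
  refine (iInf₂_le f ⟨⟨K, hf⟩, ⟨K, hg⟩⟩).trans (ENNReal.ofReal_le_ofReal ?_)
  have h₁ := abs_log_dil_le f hK hf hg
  have h₂ := abs_log_dil_le f.symm hK hg hf
  rw [lipCost]
  linarith

end Dilation

section Anchored

lemma abs_sub_le_two_mul_of_two_mul_le {a b s t r r' : ℝ} (hs : 0 ≤ s) (hsa : s ≤ a / 2)
    (ht : 0 ≤ t) (hr : 0 ≤ r) (hr2 : r ≤ 2) (hr' : 0 ≤ r') (hr'2 : r' ≤ 2) (hab : 2 * a ≤ b) :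
    |(a + r * s) - (b + r' * t)| ≤ 2 * |(a + s) - (b + t)| := by
  have h₁ : r * s ≤ 2 * s := mul_le_mul_of_nonneg_right hr2 hs
  have h₂ : r' * t ≤ 2 * t := mul_le_mul_of_nonneg_right hr'2 ht
  have h₃ : 0 ≤ r * s := mul_nonneg hr hs
  have h₄ : 0 ≤ r' * t := mul_nonneg hr' ht
  rw [abs_sub_comm, abs_sub_comm (a + s), abs_of_nonneg (by linarith),
    abs_of_nonneg (by linarith)]
  linarith

variable {s : Set ℝ} {f a r : ℝ → ℝ}

lemma lipschitzOnWith_two_of_anchored (hf : ∀ x ∈ s, f x = a x + r x * (x - a x))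
    (ha : ∀ x ∈ s, a x ≤ x ∧ x - a x ≤ a x / 2) (hr : ∀ x ∈ s, 0 ≤ r x ∧ r x ≤ 2)
    (hsame : ∀ x ∈ s, ∀ y ∈ s, a x = a y → r x = r y)
    (hsep : ∀ x ∈ s, ∀ y ∈ s, a x < a y → 2 * a x ≤ a y) :
    LipschitzOnWith 2 f s := by
  have key : ∀ x ∈ s, ∀ y ∈ s, a x ≤ a y → |f x - f y| ≤ 2 * |x - y| := by
    intro x hx y hy hxy
    rw [hf x hx, hf y hy]
    rcases hxy.eq_or_lt with heq | hlt
    · rw [← heq, ← hsame x hx y hy heq]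
      calc |a x + r x * (x - a x) - (a x + r x * (y - a x))| = r x * |x - y| := by
            rw [add_sub_add_left_eq_sub, ← mul_sub, sub_sub_sub_cancel_right, abs_mul,
              abs_of_nonneg (hr x hx).1]
        _ ≤ 2 * |x - y| := mul_le_mul_of_nonneg_right (hr x hx).2 (abs_nonneg _)
    · simpa using abs_sub_le_two_mul_of_two_mul_le (sub_nonneg.2 (ha x hx).1) (ha x hx).2
        (sub_nonneg.2 (ha y hy).1) (hr x hx).1 (hr x hx).2 (hr y hy).1 (hr y hy).2
        (hsep x hx y hy hlt)
  refine LipschitzOnWith.of_dist_le_mul fun x hx y hy => ?_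
  simp only [Real.dist_eq, NNReal.coe_ofNat]
  rcases le_total (a x) (a y) with h | h
  · exact key x hx y hy h
  · rw [abs_sub_comm, abs_sub_comm x]
    exact key y hy x hx h

end Anchored

lemma two_mul_one_div_two_pow_le {m n : ℕ} (h : m < n) : 2 * (1 / 2 ^ n : ℝ) ≤ 1 / 2 ^ m := by
  rw [mul_one_div, div_le_div_iff₀ (by positivity) (by positivity), one_mul, ← pow_succ']
  exact pow_le_pow_right₀ one_le_two h

lemma sub_le_half_of_mem_Iset {n m : ℕ} (hm : 1 ≤ m) {x : ℝ} (hx : x ∈ Iset n m) :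
    x - 1 / 2 ^ n ≤ (1 / 2 ^ n) / 2 := by
  have : 2 * (1 / 2 ^ (n + m) : ℝ) ≤ 1 / 2 ^ n := two_mul_one_div_two_pow_le (by omega)
  linarith [hx.2]

lemma eq_of_mem_Iset_of_mem_Iset {m n a b : ℕ} (ha : 1 ≤ a) (hb : 1 ≤ b) {x : ℝ}
    (hm : x ∈ Iset m a) (hn : x ∈ Iset n b) : m = n := by
  have key : ∀ {m n a b : ℕ}, 1 ≤ b → m < n → x ∈ Iset m a → x ∉ Iset n b := by
    intro m n a b hb h hm hn
    have := two_mul_one_div_two_pow_le h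
    have : (0 : ℝ) < 1 / 2 ^ n := by positivity
    linarith [hm.1, sub_le_half_of_mem_Iset hb hn]
  rcases lt_trichotomy m n with h | h | h
  · exact absurd hn (key hb h hm)
  · exact h
  · exact absurd hm (key ha h hn)

namespace Xset

variable {u v : ℕ+ → ℕ} {x y : ℝ}

open Classical in
noncomputable def index (u : ℕ+ → ℕ) (x : ℝ) : ℕ+ :=
  if h : ∃ n : ℕ+, x ∈ Iset n (u n) then h.choose else 1

noncomputable def anchor (u : ℕ+ → ℕ) (x : ℝ) : ℝ :=
  if x = 0 then 0 else 1 / 2 ^ (index u x : ℕ)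

noncomputable def slope (u v : ℕ+ → ℕ) (x : ℝ) : ℝ :=
  2 ^ u (index u x) / 2 ^ v (index u x)

noncomputable def map (u v : ℕ+ → ℕ) (x : ℝ) : ℝ :=
  anchor u x + slope u v x * (x - anchor u x)

lemma index_eq (hu : ∀ n, 1 ≤ u n) {n : ℕ+} (hx : x ∈ Iset n (u n)) : index u x = n := by
  have h : ∃ n : ℕ+, x ∈ Iset n (u n) := ⟨n, hx⟩
  rw [index, dif_pos h]
  exact PNat.coe_injective (eq_of_mem_Iset_of_mem_Iset (hu _) (hu n) h.choose_spec hx)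

lemma anchor_zero : anchor u 0 = 0 := if_pos rfl

lemma anchor_of_mem (hu : ∀ n, 1 ≤ u n) {n : ℕ+} (hx : x ∈ Iset n (u n)) :
    anchor u x = 1 / 2 ^ (n : ℕ) := by
  have : x ≠ 0 := (lt_of_lt_of_le (by positivity) hx.1).ne'
  rw [anchor, if_neg this, index_eq hu hx]

lemma slope_of_mem (hu : ∀ n, 1 ≤ u n) {n : ℕ+} (hx : x ∈ Iset n (u n)) :
    slope u v x = 2 ^ u n / 2 ^ v n := by
  rw [slope, index_eq hu hx]

lemma anchor_nonneg : 0 ≤ anchor u x := by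
  unfold anchor
  split_ifs <;> positivity

lemma slope_eq_of_anchor_eq (h : anchor u x = anchor u y) : slope u v x = slope u v y := by
  unfold anchor at h
  split_ifs at h with hx hy hy
  · rw [hx, hy]
  · exact absurd h (by positivity)
  · exact absurd h (by positivity)
  · have : index u x = index u y := PNat.coe_injective (by simpa using h)
    rw [slope, slope, this]

lemma two_mul_anchor_le_of_lt (h : anchor u x < anchor u y) : 2 * anchor u x ≤ anchor u y := by
  unfold anchor at h ⊢
  split_ifs at h ⊢ with hx hy hy
  · exact absurd h (lt_irrefl 0)
  · rw [mul_zero]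
    positivity
  · exact absurd h (not_lt.2 (by positivity))
  · refine two_mul_one_div_two_pow_le (lt_of_not_ge fun hle => h.not_ge ?_)
    exact one_div_pow_le_one_div_pow_of_le one_le_two hle

lemma slope_le_two (huv : ∀ n, u n ≤ v n + 1) : slope u v x ≤ 2 := by
  rw [slope, div_le_iff₀ (by positivity), ← pow_succ']
  exact pow_le_pow_right₀ one_le_two (huv _)

lemma anchor_le_of_mem (hu : ∀ n, 1 ≤ u n) (hx : x ∈ Xset u) :
    anchor u x ≤ x ∧ x - anchor u x ≤ anchor u x / 2 := by
  rcases hx with rfl | hx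
  · simp [anchor_zero]
  · obtain ⟨n, hn⟩ := mem_iUnion.1 hx
    rw [anchor_of_mem hu hn]
    exact ⟨hn.1, sub_le_half_of_mem_Iset (hu n) hn⟩

lemma lipschitzOnWith_map (hu : ∀ n, 1 ≤ u n) (huv : ∀ n, u n ≤ v n + 1) :
    LipschitzOnWith 2 (map u v) (Xset u) :=
  lipschitzOnWith_two_of_anchored (fun _ _ => rfl) (fun _ hx => anchor_le_of_mem hu hx)
    (fun _ _ => ⟨by unfold slope; positivity, slope_le_two huv⟩)
    (fun _ _ _ _ => slope_eq_of_anchor_eq) (fun _ _ _ _ => two_mul_anchor_le_of_lt)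

lemma map_of_mem (hu : ∀ n, 1 ≤ u n) {n : ℕ+} (hx : x ∈ Iset n (u n)) :
    map u v x = 1 / 2 ^ (n : ℕ) + 2 ^ u n / 2 ^ v n * (x - 1 / 2 ^ (n : ℕ)) := by
  rw [map, anchor_of_mem hu hx, slope_of_mem hu hx]

lemma map_mem_Iset (hu : ∀ n, 1 ≤ u n) {n : ℕ+} (hx : x ∈ Iset n (u n)) :
    map u v x ∈ Iset n (v n) := by
  rw [map_of_mem hu hx]
  obtain ⟨h₁, h₂⟩ := hx
  have hr : (0 : ℝ) < 2 ^ u n / 2 ^ v n := by positivity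
  have hscale : 2 ^ u n / 2 ^ v n * (1 / 2 ^ ((n : ℕ) + u n)) = (1 : ℝ) / 2 ^ ((n : ℕ) + v n) := by
    rw [pow_add, pow_add]
    field_simp
  constructor
  · linarith [mul_nonneg hr.le (sub_nonneg.2 h₁)]
  · linarith [mul_le_mul_of_nonneg_left (sub_le_iff_le_add'.2 h₂) hr.le]

lemma mapsTo_map (hu : ∀ n, 1 ≤ u n) : MapsTo (map u v) (Xset u) (Xset v) := by
  rintro x (rfl | hx)
  · left
    simp [map, anchor_zero]
  · obtain ⟨n, hn⟩ := mem_iUnion.1 hx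
    exact Or.inr (mem_iUnion.2 ⟨n, map_mem_Iset hu hn⟩)

lemma leftInvOn_map (hu : ∀ n, 1 ≤ u n) (hv : ∀ n, 1 ≤ v n) :
    LeftInvOn (map v u) (map u v) (Xset u) := by
  rintro x (rfl | hx)
  · simp [map, anchor_zero]
  · obtain ⟨n, hn⟩ := mem_iUnion.1 hx
    rw [map_of_mem hv (map_mem_Iset hu hn), map_of_mem hu hn]
    field_simp
    ring

noncomputable def mapEquiv (hu : ∀ n, 1 ≤ u n) (hv : ∀ n, 1 ≤ v n) : Xset u ≃ Xset v where
  toFun := (mapsTo_map hu).restrict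
  invFun := (mapsTo_map hv).restrict
  left_inv x := Subtype.ext (leftInvOn_map hu hv x.2)
  right_inv y := Subtype.ext (leftInvOn_map hv hu y.2)

lemma lipschitzWith_mapEquiv (hu : ∀ n, 1 ≤ u n) (hv : ∀ n, 1 ≤ v n)
    (huv : ∀ n, u n ≤ v n + 1) : LipschitzWith 2 (mapEquiv hu hv) :=
  LipschitzWith.of_dist_le_mul fun x y => (lipschitzOnWith_map hu huv).dist_le_mul x x.2 y y.2

instance (u : ℕ+ → ℕ) : Nontrivial (Xset u) := by
  refine nontrivial_coe_sort.2 ⟨0, Or.inl rfl, 1 / 2, Or.inr (mem_iUnion.2 ⟨1, ?_, ?_⟩), by norm_num⟩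
  · norm_num
  · simp only [PNat.one_coe, pow_one]
    linarith [show (0 : ℝ) < 1 / 2 ^ (1 + u 1) by positivity]

end Xset

/-- For any `u, v ∈ {1,2}^{ℤ>0}`, `d_L(X_u, X_v) ≤ 2 log 2`. -/
theorem lipDist_Xset_le (u v : ℕ+ → ℕ) (hu : ∀ n, u n = 1 ∨ u n = 2)
    (hv : ∀ n, v n = 1 ∨ v n = 2) :
    lipDist ↥(Xset u) ↥(Xset v) ≤ ENNReal.ofReal (2 * Real.log 2) := by
  have hu₁ : ∀ n, 1 ≤ u n := fun n => by have := hu n; omega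
  have hv₁ : ∀ n, 1 ≤ v n := fun n => by have := hv n; omega
  have huv : ∀ n, u n ≤ v n + 1 := fun n => by have := hu n; have := hv n; omega
  have hvu : ∀ n, v n ≤ u n + 1 := fun n => by have := hu n; have := hv n; omega
  simpa using lipDist_le_of_lipschitzWith (Xset.mapEquiv hu₁ hv₁) one_le_two
    (Xset.lipschitzWith_mapEquiv hu₁ hv₁ huv) (Xset.lipschitzWith_mapEquiv hv₁ hu₁ hvu)
end

section
/- Let u, v ∈ {1,2}^{ℤ_{>0}} and let f: X_u → X_v be a bi-Lipschitz homeomorphism with |log dil(f)| + |log dil(f⁻¹)| < log 2, with associated bijection P: ℤ_{>0} → ℤ_{>0} satisfying f(I(n,u_n)) = I(P(n), v_{P(n)}). Then n + u_n = P(n) + v_{P(n)} for all n ∈ ℤ_{>0}. -/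
open ENNReal

lemma dil_dist_le {X Y : Type*} [MetricSpace X] [MetricSpace Y] (f : X → Y)
    (h : ∃ K : NNReal, LipschitzWith K f) (x y : X) :
    dist (f x) (f y) ≤ dil f * dist x y := by
  obtain ⟨K, hK⟩ := h
  have hne : ((K : ℝ) ∈ {K : ℝ | ∀ x y : X, dist (f x) (f y) ≤ K * dist x y}) :=
    fun a b => hK.dist_le_mul a b
  rcases eq_or_lt_of_le (dist_nonneg : (0:ℝ) ≤ dist x y) with h0 | h0
  · have hxy : x = y := by rwa [eq_comm, dist_eq_zero] at h0
    subst hxy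
    simp
  · have hlb : dist (f x) (f y) / dist x y ≤ dil f := by
      apply le_csInf ⟨(K : ℝ), hne⟩
      intro b hb
      exact (div_le_iff₀ h0).mpr (hb x y)
    calc dist (f x) (f y) = (dist (f x) (f y) / dist x y) * dist x y :=
          (div_mul_cancel₀ _ (ne_of_gt h0)).symm
      _ ≤ dil f * dist x y := mul_le_mul_of_nonneg_right hlb h0.le

lemma left_mem_Iset (n m : ℕ) : (1:ℝ)/2^n ∈ Iset n m :=
  ⟨le_refl _, le_add_of_nonneg_right (by positivity)⟩

lemma right_mem_Iset (n m : ℕ) : (1:ℝ)/2^n + 1/2^(n+m) ∈ Iset n m :=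
  ⟨le_add_of_nonneg_right (by positivity), le_refl _⟩

lemma mem_Xset_of_mem_Iset (u : ℕ+ → ℕ) (n : ℕ+) {x : ℝ}
    (hx : x ∈ Iset (n : ℕ) (u n)) : x ∈ Xset u :=
  Or.inr (Set.mem_iUnion.mpr ⟨n, hx⟩)

lemma dist_le_of_mem_Iset {n m : ℕ} {x y : ℝ} (hx : x ∈ Iset n m) (hy : y ∈ Iset n m) :
    dist x y ≤ 1/2^(n+m) := by
  obtain ⟨hx1, hx2⟩ := hx
  obtain ⟨hy1, hy2⟩ := hy
  rw [Real.dist_eq, abs_sub_le_iff]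
  constructor <;> linarith

lemma le_of_pow_ineq {s t : ℕ} (h : (1:ℝ)/2^s < 2 * (1/2^t)) : t ≤ s := by
  have h2s : (0:ℝ) < 2^s := by positivity
  have h2t : (0:ℝ) < 2^t := by positivity
  have h' : (1:ℝ)/2^s < 2/2^t := by rw [mul_one_div] at h; exact h
  have : (2:ℝ)^t < 2^(s+1) := by
    have := (div_lt_div_iff₀ h2s h2t).mp h'
    rw [pow_succ]
    linarith
  have := (pow_lt_pow_iff_right₀ (one_lt_two : (1:ℝ) < 2)).mp this
  omega

/-- First step: if `f : X_u → X_v` is bi-Lipschitz with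
`|log dil f| + |log dil f⁻¹| < log 2`, then `n + u_n = P(n) + v_{P(n)}` for all `n`. -/
theorem step_one (u v : ℕ+ → ℕ) (hu : ∀ n, u n = 1 ∨ u n = 2)
    (hv : ∀ n, v n = 1 ∨ v n = 2) (f : ↥(Xset u) ≃ ↥(Xset v))
    (hbl : IsBiLipschitzEquiv f) (hcost : lipCost f < Real.log 2)
    (P : ℕ+ ≃ ℕ+)
    (hP : ∀ n : ℕ+,
      (Subtype.val ∘ f) '' {x : Xset u | (x : ℝ) ∈ Iset (n : ℕ) (u n)}
        = Iset ((P n : ℕ+) : ℕ) (v (P n))) :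
    ∀ n : ℕ+, (n : ℕ) + u n = ((P n : ℕ+) : ℕ) + v (P n) := by
  obtain ⟨hf1, hf2⟩ := hbl
  set A := dil (f : ↥(Xset u) → ↥(Xset v)) with hA
  set B := dil (f.symm : ↥(Xset v) → ↥(Xset u)) with hB
  have hfd : ∀ x y, dist (f x) (f y) ≤ A * dist x y := dil_dist_le _ hf1
  have hgd : ∀ x y, dist (f.symm x) (f.symm y) ≤ B * dist x y := dil_dist_le _ hf2
  -- two distinct points in each space
  have h0u : (0:ℝ) ∈ Xset u := Or.inl rfl
  have h0v : (0:ℝ) ∈ Xset v := Or.inl rfl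
  have h1u : (1:ℝ)/2^((1:ℕ+):ℕ) ∈ Xset u := mem_Xset_of_mem_Iset u 1 (left_mem_Iset _ _)
  have h1v : (1:ℝ)/2^((1:ℕ+):ℕ) ∈ Xset v := mem_Xset_of_mem_Iset v 1 (left_mem_Iset _ _)
  have hhalf : (1:ℝ)/2^((1:ℕ+):ℕ) ≠ 0 := by norm_num
  -- positivity of A and B
  have hApos : 0 < A := by
    set p : ↥(Xset u) := ⟨0, h0u⟩
    set q : ↥(Xset u) := ⟨_, h1u⟩
    have hpq : p ≠ q := by
      intro h
      exact hhalf (congrArg Subtype.val h).symm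
    have h1 : 0 < dist (f p) (f q) := dist_pos.mpr (fun h => hpq (f.injective h))
    have h2 := hfd p q
    nlinarith [dist_nonneg (x := p) (y := q)]
  have hBpos : 0 < B := by
    set p : ↥(Xset v) := ⟨0, h0v⟩
    set q : ↥(Xset v) := ⟨_, h1v⟩
    have hpq : p ≠ q := by
      intro h
      exact hhalf (congrArg Subtype.val h).symm
    have h1 : 0 < dist (f.symm p) (f.symm q) := dist_pos.mpr (fun h => hpq (f.symm.injective h))
    have h2 := hgd p q
    nlinarith [dist_nonneg (x := p) (y := q)]
  -- A < 2 and B < 2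
  have hcost' : |Real.log A| + |Real.log B| < Real.log 2 := hcost
  have hA2 : A < 2 := by
    have : Real.log A < Real.log 2 := by
      have := abs_nonneg (Real.log B)
      have := le_abs_self (Real.log A)
      linarith
    exact (Real.log_lt_log_iff hApos (by norm_num)).mp this
  have hB2 : B < 2 := by
    have : Real.log B < Real.log 2 := by
      have := abs_nonneg (Real.log A)
      have := le_abs_self (Real.log B)
      linarith
    exact (Real.log_lt_log_iff hBpos (by norm_num)).mp this
  intro n
  set s : ℕ := (n : ℕ) + u n with hs
  set t : ℕ := ((P n : ℕ+) : ℕ) + v (P n) with ht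
  set a : ℝ := 1/2^(n:ℕ) with ha
  set c : ℝ := 1/2^((P n : ℕ+):ℕ) with hc
  have hIu : Iset (n : ℕ) (u n) = Set.Icc a (a + 1/2^s) := rfl
  have hIv : Iset ((P n : ℕ+):ℕ) (v (P n)) = Set.Icc c (c + 1/2^t) := rfl
  have haM : a ∈ Iset (n : ℕ) (u n) := left_mem_Iset _ _
  have hbM : a + 1/2^s ∈ Iset (n : ℕ) (u n) := right_mem_Iset _ _
  have haX : a ∈ Xset u := mem_Xset_of_mem_Iset u n haM
  have hbX : a + 1/2^s ∈ Xset u := mem_Xset_of_mem_Iset u n hbM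
  set xa : ↥(Xset u) := ⟨a, haX⟩
  set xb : ↥(Xset u) := ⟨a + 1/2^s, hbX⟩
  have h2s : (0:ℝ) < 1/2^s := by positivity
  have h2t : (0:ℝ) < 1/2^t := by positivity
  -- direction 1 : t ≤ s, using f.symm
  have hts : t ≤ s := by
    have hfaM : ((f xa : ↥(Xset v)) : ℝ) ∈ Iset ((P n : ℕ+):ℕ) (v (P n)) := by
      rw [← hP n]; exact ⟨xa, haM, rfl⟩
    have hfbM : ((f xb : ↥(Xset v)) : ℝ) ∈ Iset ((P n : ℕ+):ℕ) (v (P n)) := by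
      rw [← hP n]; exact ⟨xb, hbM, rfl⟩
    have hdf : dist (f xa) (f xb) ≤ 1/2^t := by
      rw [Subtype.dist_eq]
      exact dist_le_of_mem_Iset hfaM hfbM
    have hd : dist xa xb = 1/2^s := by
      rw [Subtype.dist_eq]
      simp only [xa, xb]
      rw [Real.dist_eq]
      rw [abs_of_nonpos (by linarith)]
      ring
    have h1 : dist xa xb ≤ B * dist (f xa) (f xb) := by
      have := hgd (f xa) (f xb)
      simpa using this
    have h2 : (1:ℝ)/2^s < 2 * (1/2^t) := by
      have hd0 : (0:ℝ) ≤ dist (f xa) (f xb) := dist_nonneg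
      rw [hd] at h1
      nlinarith
    exact le_of_pow_ineq h2
  -- direction 2 : s ≤ t, using f on preimages of endpoints of the target interval
  have hst : s ≤ t := by
    have hcM : c ∈ Iset ((P n : ℕ+):ℕ) (v (P n)) := left_mem_Iset _ _
    have hdM : c + 1/2^t ∈ Iset ((P n : ℕ+):ℕ) (v (P n)) := right_mem_Iset _ _
    rw [← hP n] at hcM hdM
    obtain ⟨x1, hx1M, hx1⟩ := hcM
    obtain ⟨x2, hx2M, hx2⟩ := hdM
    have hdf : dist (f x1) (f x2) = 1/2^t := by
      rw [Subtype.dist_eq]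
      simp only [Function.comp_apply] at hx1 hx2
      rw [hx1, hx2, Real.dist_eq, abs_of_nonpos (by linarith)]
      ring
    have hdx : dist x1 x2 ≤ 1/2^s := dist_le_of_mem_Iset hx1M hx2M
    have h1 := hfd x1 x2
    rw [hdf] at h1
    have h2 : (1:ℝ)/2^t < 2 * (1/2^s) := by
      have hd0 : (0:ℝ) ≤ dist x1 x2 := dist_nonneg
      nlinarith
    exact le_of_pow_ineq h2
  omega
end

section
/- There exists a family (X_u)_{u ∈ {1,2}^{ℤ_{>0}}} of compact metric spaces, indexed by a set of continuum cardinality, such that d_L(X_u, X_v) ≤ 2 log 2 for all u, v, and d_L(X_u, X_v) ≥ log 2 whenever u ≠ v. -/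
open ENNReal

/-- A bundled compact metric space. -/
structure CptMet where
  carrier : Type
  [inst : MetricSpace carrier]
  [cpt : CompactSpace carrier]

attribute [instance] CptMet.inst CptMet.cpt


namespace LipFam

/-- `cpt n = 2^{-n}`, the left endpoint of the `n`-th interval. -/
noncomputable def cpt (n : ℕ+) : ℝ := (2:ℝ) ^ (-(n:ℤ))

/-- exponent offset: 1 or 2. -/
def exu (u : ℕ+ → Bool) (n : ℕ+) : ℤ := if u n then 2 else 1

/-- length of the `n`-th interval. -/
noncomputable def len (u : ℕ+ → Bool) (n : ℕ+) : ℝ := (2:ℝ) ^ (-(n:ℤ) - exu u n)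

/-- The `n`-th interval. -/
noncomputable def I (u : ℕ+ → Bool) (n : ℕ+) : Set ℝ := Set.Icc (cpt n) (cpt n + len u n)

/-- The space as a subset of ℝ. -/
noncomputable def S (u : ℕ+ → Bool) : Set ℝ := insert 0 (⋃ n, I u n)

lemma cpt_pos (n : ℕ+) : 0 < cpt n := zpow_pos (by norm_num) _

lemma len_pos (u : ℕ+ → Bool) (n : ℕ+) : 0 < len u n := zpow_pos (by norm_num) _

lemma exu_one_le (u : ℕ+ → Bool) (n : ℕ+) : 1 ≤ exu u n := by
  unfold exu; split <;> norm_num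

lemma exu_le_two (u : ℕ+ → Bool) (n : ℕ+) : exu u n ≤ 2 := by
  unfold exu; split <;> norm_num

lemma len_le (u : ℕ+ → Bool) (n : ℕ+) : len u n ≤ cpt n / 2 := by
  have : len u n ≤ (2:ℝ) ^ (-(n:ℤ) - 1) := by
    apply zpow_le_zpow_right₀ (by norm_num)
    have := exu_one_le u n; omega
  calc len u n ≤ (2:ℝ) ^ (-(n:ℤ) - 1) := this
    _ = cpt n / 2 := by rw [cpt, zpow_sub₀ (by norm_num : (2:ℝ) ≠ 0)]; norm_num

lemma mem_I_bounds {u : ℕ+ → Bool} {n : ℕ+} {x : ℝ} (hx : x ∈ I u n) :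
    cpt n ≤ x ∧ x ≤ 3/2 * cpt n := by
  refine ⟨hx.1, hx.2.trans ?_⟩
  have := len_le u n; linarith

lemma cpt_lt_cpt {n m : ℕ+} (h : m < n) : cpt n < cpt m :=
  zpow_lt_zpow_right₀ (by norm_num) (by exact_mod_cast neg_lt_neg (by exact_mod_cast h))

lemma two_cpt_le {n m : ℕ+} (h : n < m) : 2 * cpt m ≤ cpt n := by
  have : (2:ℝ) * cpt m = 2 ^ (-(m:ℤ) + 1) := by
    rw [cpt, zpow_add₀ (by norm_num : (2:ℝ) ≠ 0)]; ring
  rw [this, cpt]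
  apply zpow_le_zpow_right₀ (by norm_num)
  have : (n:ℤ) < (m:ℤ) := by exact_mod_cast h
  omega

/-- The crucial uniqueness: a point lies in at most one interval (even across different `u`). -/
lemma I_unique {u v : ℕ+ → Bool} {n m : ℕ+} {x : ℝ} (hn : x ∈ I u n) (hm : x ∈ I v m) :
    n = m := by
  by_contra hne
  rcases lt_or_gt_of_ne hne with h | h
  · have h1 := (mem_I_bounds hn).1
    have h2 := (mem_I_bounds hm).2
    have := two_cpt_le h
    have := cpt_pos m
    linarith
  · have h1 := (mem_I_bounds hm).1
    have h2 := (mem_I_bounds hn).2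
    have := two_cpt_le h
    have := cpt_pos n
    linarith

lemma zero_not_mem_I (u : ℕ+ → Bool) (n : ℕ+) : (0:ℝ) ∉ I u n := by
  intro h; have := (mem_I_bounds h).1; have := cpt_pos n; linarith

lemma I_subset_S (u : ℕ+ → Bool) (n : ℕ+) : I u n ⊆ S u :=
  fun x hx => Set.mem_insert_iff.2 (Or.inr (Set.mem_iUnion.2 ⟨n, hx⟩))

lemma zero_mem_S (u : ℕ+ → Bool) : (0:ℝ) ∈ S u := Set.mem_insert _ _

lemma mem_S_iff {u : ℕ+ → Bool} {x : ℝ} : x ∈ S u ↔ x = 0 ∨ ∃ n, x ∈ I u n := by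
  simp [S, Set.mem_insert_iff, Set.mem_iUnion]

lemma S_nonneg {u : ℕ+ → Bool} {x : ℝ} (hx : x ∈ S u) : 0 ≤ x := by
  rcases mem_S_iff.1 hx with h | ⟨n, h⟩
  · simp [h]
  · exact le_of_lt (lt_of_lt_of_le (cpt_pos n) h.1)

lemma S_le_one {u : ℕ+ → Bool} {x : ℝ} (hx : x ∈ S u) : x ≤ 1 := by
  rcases mem_S_iff.1 hx with h | ⟨n, h⟩
  · simp [h]
  · have h2 := (mem_I_bounds h).2
    have : cpt n ≤ cpt 1 := by
      rcases eq_or_lt_of_le (show (1:ℕ+) ≤ n from n.one_le) with h' | h'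
      · rw [← h']
      · exact le_of_lt (cpt_lt_cpt h')
    have : cpt 1 = 1/2 := by norm_num [cpt]
    linarith [this ▸ ‹cpt n ≤ cpt 1›]

lemma isClosed_S (u : ℕ+ → Bool) : IsClosed (S u) := by
  have key : S u = ⋂ (N : ℕ+), (Set.Icc 0 (cpt N) ∪ ⋃ n ∈ Set.Iic N, I u n) := by
    ext x
    constructor
    · intro hx
      refine Set.mem_iInter.2 fun N => ?_
      rcases mem_S_iff.1 hx with h | ⟨n, h⟩
      · exact Or.inl ⟨le_of_eq h.symm, h ▸ le_of_lt (cpt_pos N)⟩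
      · rcases le_or_gt n N with hn | hn
        · exact Or.inr (Set.mem_biUnion hn h)
        · left
          refine ⟨S_nonneg (I_subset_S u n h), ?_⟩
          have h2 := (mem_I_bounds h).2
          have := two_cpt_le hn
          have := cpt_pos n
          linarith
    · intro hx
      by_contra hxS
      have hx0 : x ≠ 0 := fun h => hxS (h ▸ zero_mem_S u)
      have hxI : ∀ n, x ∉ I u n := fun n hn => hxS (I_subset_S u n hn)
      have hxpos : 0 < x := by
        have := Set.mem_iInter.1 hx 1
        rcases this with h | h
        · rcases h with ⟨h1, _⟩; exact lt_of_le_of_ne h1 (Ne.symm hx0)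
        · simp only [Set.mem_iUnion] at h
          rcases h with ⟨n, _, hn⟩; exact absurd hn (hxI n)
      -- find N with cpt N < x
      obtain ⟨k, hk⟩ := exists_pow_lt_of_lt_one hxpos (by norm_num : (1:ℝ)/2 < 1)
      set N : ℕ+ := ⟨k + 1, Nat.succ_pos k⟩
      have hcN : cpt N < x := by
        have : cpt N = (1/2:ℝ) ^ (k+1) := by
          rw [cpt]
          have : (-(N:ℤ)) = -((k:ℤ)+1) := by simp [N]
          rw [this]
          rw [show ((1:ℝ)/2) = 2⁻¹ by norm_num, inv_pow, ← zpow_natCast, ← zpow_neg]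
          norm_num
        rw [this]
        calc ((1:ℝ)/2) ^ (k+1) ≤ (1/2)^k := by
              apply pow_le_pow_of_le_one (by norm_num) (by norm_num) (Nat.le_succ k)
          _ < x := hk
      have := Set.mem_iInter.1 hx N
      rcases this with h | h
      · linarith [h.2]
      · simp only [Set.mem_iUnion] at h
        rcases h with ⟨n, _, hn⟩; exact absurd hn (hxI n)
  rw [key]
  apply isClosed_iInter
  intro N
  apply IsClosed.union isClosed_Icc
  apply (Set.finite_Iic N).isClosed_biUnion
  intro n _
  exact isClosed_Icc

lemma isCompact_S (u : ℕ+ → Bool) : IsCompact (S u) := by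
  apply IsCompact.of_isClosed_subset (isCompact_Icc (a := (0:ℝ)) (b := 1)) (isClosed_S u)
  exact fun x hx => ⟨S_nonneg hx, S_le_one hx⟩


/-- ratio between corresponding interval lengths. -/
noncomputable def ratio (u v : ℕ+ → Bool) (n : ℕ+) : ℝ := len v n / len u n

lemma ratio_eq (u v : ℕ+ → Bool) (n : ℕ+) :
    ratio u v n = (2:ℝ) ^ (exu u n - exu v n) := by
  rw [ratio, len, len, ← zpow_sub₀ (by norm_num : (2:ℝ) ≠ 0)]
  ring_nf

lemma ratio_pos (u v : ℕ+ → Bool) (n : ℕ+) : 0 < ratio u v n :=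
  div_pos (len_pos v n) (len_pos u n)

lemma ratio_le_two (u v : ℕ+ → Bool) (n : ℕ+) : ratio u v n ≤ 2 := by
  rw [ratio_eq]
  calc (2:ℝ) ^ (exu u n - exu v n) ≤ (2:ℝ) ^ (1:ℤ) := by
        apply zpow_le_zpow_right₀ (by norm_num)
        have := exu_le_two u n; have := exu_one_le v n; omega
    _ = 2 := by norm_num

lemma half_le_ratio (u v : ℕ+ → Bool) (n : ℕ+) : 1/2 ≤ ratio u v n := by
  rw [ratio_eq]
  calc (1:ℝ)/2 = (2:ℝ) ^ (-1:ℤ) := by norm_num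
    _ ≤ (2:ℝ) ^ (exu u n - exu v n) := by
        apply zpow_le_zpow_right₀ (by norm_num)
        have := exu_one_le u n; have := exu_le_two v n; omega

lemma ratio_mul (u v : ℕ+ → Bool) (n : ℕ+) : ratio v u n * ratio u v n = 1 := by
  rw [ratio, ratio, div_mul_div_comm, mul_comm (len u n)]
  exact div_self (mul_pos (len_pos v n) (len_pos u n)).ne'

open scoped Classical in
/-- The bi-Lipschitz comparison map, as a map on ℝ. -/
noncomputable def Phi (u v : ℕ+ → Bool) (x : ℝ) : ℝ :=
  if h : ∃ n, x ∈ I u n then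
    cpt h.choose + ratio u v h.choose * (x - cpt h.choose)
  else 0

lemma Phi_eq_of_mem {u : ℕ+ → Bool} (v : ℕ+ → Bool) {n : ℕ+} {x : ℝ} (hx : x ∈ I u n) :
    Phi u v x = cpt n + ratio u v n * (x - cpt n) := by
  have h : ∃ n, x ∈ I u n := ⟨n, hx⟩
  classical
  rw [Phi]
  rw [dif_pos h]
  have : h.choose = n := I_unique h.choose_spec hx
  rw [this]

lemma Phi_zero (u v : ℕ+ → Bool) : Phi u v 0 = 0 := by
  classical
  rw [Phi]
  rw [dif_neg]
  rintro ⟨n, hn⟩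
  exact zero_not_mem_I u n hn

lemma Phi_maps_I {u : ℕ+ → Bool} (v : ℕ+ → Bool) {n : ℕ+} {x : ℝ} (hx : x ∈ I u n) :
    Phi u v x ∈ I v n := by
  rw [Phi_eq_of_mem v hx]
  have h1 : 0 ≤ x - cpt n := sub_nonneg.2 hx.1
  have h2 : x - cpt n ≤ len u n := by linarith [hx.2]
  constructor
  · nlinarith [ratio_pos u v n]
  · have : ratio u v n * (x - cpt n) ≤ len v n := by
      calc ratio u v n * (x - cpt n) ≤ ratio u v n * len u n := by
            nlinarith [ratio_pos u v n]
        _ = len v n := by rw [ratio]; exact div_mul_cancel₀ _ (ne_of_gt (len_pos u n))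
    linarith

lemma Phi_mem_S {u : ℕ+ → Bool} (v : ℕ+ → Bool) {x : ℝ} (hx : x ∈ S u) :
    Phi u v x ∈ S v := by
  rcases mem_S_iff.1 hx with h | ⟨n, h⟩
  · rw [h, Phi_zero]; exact zero_mem_S v
  · exact I_subset_S v n (Phi_maps_I v h)

lemma Phi_inv {u v : ℕ+ → Bool} {x : ℝ} (hx : x ∈ S u) :
    Phi v u (Phi u v x) = x := by
  rcases mem_S_iff.1 hx with h | ⟨n, h⟩
  · rw [h, Phi_zero, Phi_zero]
  · rw [Phi_eq_of_mem v h, Phi_eq_of_mem u (by rw [← Phi_eq_of_mem v h]; exact Phi_maps_I v h)]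
    have h' := ratio_mul u v n
    linear_combination (x - cpt n) * h'

/-- Core estimate, one interval and zero. -/
lemma Phi_est_zero {u : ℕ+ → Bool} (v : ℕ+ → Bool) {n : ℕ+} {x : ℝ} (hx : x ∈ I u n) :
    0 ≤ Phi u v x ∧ Phi u v x ≤ 2 * x := by
  rw [Phi_eq_of_mem v hx]
  have h1 : 0 ≤ x - cpt n := sub_nonneg.2 hx.1
  have hr2 := ratio_le_two u v n
  have hr0 := ratio_pos u v n
  have hc := cpt_pos n
  constructor
  · nlinarith
  · nlinarith

/-- Core estimate, two different intervals, `n < m` so `x` in the outer one. -/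
lemma Phi_est_two {u : ℕ+ → Bool} (v : ℕ+ → Bool) {n m : ℕ+} {x y : ℝ}
    (hx : x ∈ I u n) (hy : y ∈ I u m) (hnm : n < m) :
    0 ≤ Phi u v x - Phi u v y ∧ Phi u v x - Phi u v y ≤ 2 * (x - y) := by
  have hp1 : 0 ≤ x - cpt n := sub_nonneg.2 hx.1
  have hp2 : x - cpt n ≤ len u n := by linarith [hx.2]
  have hq1 : 0 ≤ y - cpt m := sub_nonneg.2 hy.1
  have hq2 : y - cpt m ≤ len u m := by linarith [hy.2]
  have hrn2 := ratio_le_two u v n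
  have hrn0 := half_le_ratio u v n
  have hrm2 := ratio_le_two u v m
  have hrm0 := half_le_ratio u v m
  have hcm := cpt_pos m
  have hcn := cpt_pos n
  have hlm := len_le u m
  have hln := len_le u n
  have h2c := two_cpt_le hnm
  have hbx := (mem_I_bounds (Phi_maps_I v hx)).1
  have hby := (mem_I_bounds (Phi_maps_I v hy)).2
  have e1 : ratio u v n * (x - cpt n) ≤ 2 * (x - cpt n) := by
    nlinarith [mul_nonneg (by linarith : (0:ℝ) ≤ 2 - ratio u v n) hp1]
  have e2 : 2 * (y - cpt m) - ratio u v m * (y - cpt m) ≤ 3/2 * (y - cpt m) := by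
    nlinarith [mul_nonneg (by linarith : (0:ℝ) ≤ ratio u v m - 1/2) hq1]
  constructor
  · linarith
  · rw [Phi_eq_of_mem v hx, Phi_eq_of_mem v hy]
    have hx2 : x = cpt n + (x - cpt n) := by ring
    linarith

lemma Phi_diff_le (u v : ℕ+ → Bool) {x y : ℝ} (hx : x ∈ S u) (hy : y ∈ S u) :
    Phi u v x - Phi u v y ≤ 2 * |x - y| := by
  have habs : 0 ≤ 2 * |x - y| := by positivity
  rcases mem_S_iff.1 hx with h0x | ⟨n, hxn⟩
  · subst h0x; rw [Phi_zero]
    rcases mem_S_iff.1 hy with h0y | ⟨m, hym⟩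
    · simp [h0y, Phi_zero]
    · have h1 := (Phi_est_zero v hym).1
      linarith
  · rcases mem_S_iff.1 hy with h0y | ⟨m, hym⟩
    · subst h0y; rw [Phi_zero]
      have h2 := (Phi_est_zero v hxn).2
      have hx0 : 0 < x := lt_of_lt_of_le (cpt_pos n) hxn.1
      have : x ≤ |x - 0| := by rw [sub_zero, abs_of_pos hx0]
      linarith
    · rcases lt_trichotomy n m with h | h | h
      · -- x in outer interval? no: n < m means x is in interval n which is to the RIGHT
        have := (Phi_est_two v hxn hym h).2
        have hxy : x - y ≤ |x - y| := le_abs_self _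
        linarith
      · subst h
        rw [Phi_eq_of_mem v hxn, Phi_eq_of_mem v hym]
        have : cpt n + ratio u v n * (x - cpt n) - (cpt n + ratio u v n * (y - cpt n))
            = ratio u v n * (x - y) := by ring
        rw [this]
        calc ratio u v n * (x - y) ≤ |ratio u v n * (x - y)| := le_abs_self _
          _ = ratio u v n * |x - y| := by
              rw [abs_mul, abs_of_pos (ratio_pos u v n)]
          _ ≤ 2 * |x - y| := by
              have := ratio_le_two u v n
              nlinarith [abs_nonneg (x - y)]
      · have := (Phi_est_two v hym hxn h).1
        linarith

lemma Phi_lip (u v : ℕ+ → Bool) {x y : ℝ} (hx : x ∈ S u) (hy : y ∈ S u) :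
    |Phi u v x - Phi u v y| ≤ 2 * |x - y| := by
  rw [abs_sub_le_iff]
  refine ⟨Phi_diff_le u v hx hy, ?_⟩
  rw [abs_sub_comm]
  exact Phi_diff_le u v hy hx

lemma cpt_mem_I (u : ℕ+ → Bool) (n : ℕ+) : cpt n ∈ I u n :=
  ⟨le_refl _, by linarith [len_pos u n]⟩

lemma right_mem_I (u : ℕ+ → Bool) (n : ℕ+) : cpt n + len u n ∈ I u n :=
  ⟨by linarith [len_pos u n], le_refl _⟩

/-- The subtype map. -/
noncomputable def phiMap (u v : ℕ+ → Bool) (x : ↥(S u)) : ↥(S v) :=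
  ⟨Phi u v x.1, Phi_mem_S v x.2⟩

lemma phiMap_dist (u v : ℕ+ → Bool) (x y : ↥(S u)) :
    dist (phiMap u v x) (phiMap u v y) ≤ 2 * dist x y := by
  rw [Subtype.dist_eq, Subtype.dist_eq, Real.dist_eq, Real.dist_eq]
  exact Phi_lip u v x.2 y.2

noncomputable def phiEquiv (u v : ℕ+ → Bool) : ↥(S u) ≃ ↥(S v) where
  toFun := phiMap u v
  invFun := phiMap v u
  left_inv := fun x => Subtype.ext (Phi_inv x.2)
  right_inv := fun y => Subtype.ext (Phi_inv y.2)

lemma phiMap_lipschitz (u v : ℕ+ → Bool) : LipschitzWith 2 (phiMap u v) :=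
  LipschitzWith.of_dist_le_mul (fun x y => by
    have := phiMap_dist u v x y
    push_cast
    exact this)

lemma isBiLip_phiEquiv (u v : ℕ+ → Bool) : IsBiLipschitzEquiv (phiEquiv u v) :=
  ⟨⟨2, phiMap_lipschitz u v⟩, ⟨2, phiMap_lipschitz v u⟩⟩

/-- The set of Lipschitz constants. -/
def LSet {X Y : Type*} [MetricSpace X] [MetricSpace Y] (f : X → Y) : Set ℝ :=
  {K : ℝ | ∀ x y : X, dist (f x) (f y) ≤ K * dist x y}

lemma dil_eq {X Y : Type*} [MetricSpace X] [MetricSpace Y] (f : X → Y) :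
    dil f = sInf (LSet f) := rfl

noncomputable def pt0 (u : ℕ+ → Bool) : ↥(S u) := ⟨0, zero_mem_S u⟩

noncomputable def ptc (u : ℕ+ → Bool) (n : ℕ+) : ↥(S u) :=
  ⟨cpt n, I_subset_S u n (cpt_mem_I u n)⟩

lemma phiMap_pt0 (u v : ℕ+ → Bool) : phiMap u v (pt0 u) = pt0 v :=
  Subtype.ext (Phi_zero u v)

lemma phiMap_ptc (u v : ℕ+ → Bool) (n : ℕ+) : phiMap u v (ptc u n) = ptc v n := by
  apply Subtype.ext
  show Phi u v (cpt n) = cpt n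
  rw [Phi_eq_of_mem v (cpt_mem_I u n)]
  ring

lemma dist_ptc_pt0 (u : ℕ+ → Bool) (n : ℕ+) : dist (ptc u n) (pt0 u) = cpt n := by
  rw [Subtype.dist_eq, Real.dist_eq]
  show |cpt n - 0| = cpt n
  rw [sub_zero, abs_of_pos (cpt_pos n)]

lemma one_le_mem_LSet_phi {u v : ℕ+ → Bool} {K : ℝ} (hK : K ∈ LSet (phiMap u v)) :
    1 ≤ K := by
  have := hK (ptc u 1) (pt0 u)
  rw [phiMap_pt0, phiMap_ptc, dist_ptc_pt0, dist_ptc_pt0] at this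
  have := cpt_pos 1
  nlinarith

lemma two_mem_LSet_phi (u v : ℕ+ → Bool) : (2:ℝ) ∈ LSet (phiMap u v) :=
  fun x y => phiMap_dist u v x y

lemma dil_phi_bounds (u v : ℕ+ → Bool) :
    1 ≤ dil (phiMap u v) ∧ dil (phiMap u v) ≤ 2 := by
  constructor
  · exact le_csInf ⟨2, two_mem_LSet_phi u v⟩ (fun K hK => one_le_mem_LSet_phi hK)
  · exact csInf_le ⟨1, fun K hK => one_le_mem_LSet_phi hK⟩ (two_mem_LSet_phi u v)

lemma abs_log_dil_phi (u v : ℕ+ → Bool) :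
    |Real.log (dil (phiMap u v))| ≤ Real.log 2 := by
  obtain ⟨h1, h2⟩ := dil_phi_bounds u v
  rw [abs_of_nonneg (Real.log_nonneg h1)]
  exact Real.log_le_log (by linarith) h2

lemma lipCost_phi (u v : ℕ+ → Bool) : lipCost (phiEquiv u v) ≤ 2 * Real.log 2 := by
  have h1 : (phiEquiv u v : ↥(S u) → ↥(S v)) = phiMap u v := rfl
  have h2 : ((phiEquiv u v).symm : ↥(S v) → ↥(S u)) = phiMap v u := rfl
  rw [lipCost, h1, h2]
  have := abs_log_dil_phi u v
  have := abs_log_dil_phi v u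
  linarith

lemma lipDist_le (u v : ℕ+ → Bool) :
    lipDist ↥(S u) ↥(S v) ≤ ENNReal.ofReal (2 * Real.log 2) := by
  calc lipDist ↥(S u) ↥(S v)
      ≤ ⨅ (_ : IsBiLipschitzEquiv (phiEquiv u v)), ENNReal.ofReal (lipCost (phiEquiv u v)) :=
        iInf_le _ _
    _ ≤ ENNReal.ofReal (lipCost (phiEquiv u v)) := iInf_le _ (isBiLip_phiEquiv u v)
    _ ≤ ENNReal.ofReal (2 * Real.log 2) := ENNReal.ofReal_le_ofReal (lipCost_phi u v)


/-! ### Lower bound -/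

lemma gap_notMem (w : ℕ+ → Bool) (m : ℕ+) : (7/4 : ℝ) * cpt m ∉ S w := by
  intro h
  rcases mem_S_iff.1 h with h0 | ⟨k, hk⟩
  · have := cpt_pos m; nlinarith
  · obtain ⟨h1, h2⟩ := mem_I_bounds hk
    rcases lt_trichotomy k m with h' | h' | h'
    · have := two_cpt_le h'; have := cpt_pos m; linarith
    · subst h'; have := cpt_pos k; linarith
    · have := two_cpt_le h'; have := cpt_pos k; linarith

lemma gap_between {w : ℕ+ → Bool} {n : ℕ+} {p q : ℝ} (hp : p ∈ S w) (hpn : p ∉ I w n)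
    (hq : q ∈ I w n) : ∃ g, g ∈ Set.uIcc p q ∧ g ∉ S w := by
  rcases mem_S_iff.1 hp with h0 | ⟨m, hm⟩
  · refine ⟨7/4 * cpt (n+1), ?_, gap_notMem w (n+1)⟩
    subst h0
    rw [Set.mem_uIcc]
    left
    have hc := cpt_pos (n+1)
    refine ⟨by positivity, ?_⟩
    have hlt : n < n + 1 := by rw [← PNat.coe_lt_coe]; push_cast; omega
    have h2 := two_cpt_le hlt
    have := hq.1
    linarith
  · have hmn : m ≠ n := fun h => hpn (h ▸ hm)
    rcases lt_or_gt_of_ne hmn with h | h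
    · refine ⟨7/4 * cpt n, ?_, gap_notMem w n⟩
      rw [Set.mem_uIcc]; right
      constructor
      · linarith [(mem_I_bounds hq).2, cpt_pos n]
      · linarith [(mem_I_bounds hm).1, two_cpt_le h, cpt_pos n]
    · refine ⟨7/4 * cpt m, ?_, gap_notMem w m⟩
      rw [Set.mem_uIcc]; left
      constructor
      · linarith [(mem_I_bounds hm).2, cpt_pos m]
      · linarith [(mem_I_bounds hq).1, two_cpt_le h, cpt_pos m]

/-- The `n`-th interval, inside the subtype. -/
def C (w : ℕ+ → Bool) (n : ℕ+) : Set ↥(S w) := Subtype.val ⁻¹' (I w n)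

lemma isPreconnected_C (w : ℕ+ → Bool) (n : ℕ+) : IsPreconnected (C w n) := by
  rw [← Topology.IsInducing.subtypeVal.isPreconnected_image]
  have himg : Subtype.val '' C w n = I w n := by
    rw [C, Set.image_preimage_eq_inter_range, Subtype.range_coe]
    exact Set.inter_eq_self_of_subset_left (I_subset_S w n)
  rw [himg]
  exact isPreconnected_Icc

lemma comp_eq_C {w : ℕ+ → Bool} {n : ℕ+} (z : ↥(S w)) (hz : z.1 ∈ I w n) :
    connectedComponent z = C w n := by
  apply Set.Subset.antisymm
  · intro y hy
    by_contra hyn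
    have hT : IsPreconnected (Subtype.val '' connectedComponent z) :=
      isPreconnected_connectedComponent.image _ continuous_subtype_val.continuousOn
    obtain ⟨g, hg1, hg2⟩ := gap_between (p := y.1) (q := z.1) y.2 hyn hz
    have : g ∈ Subtype.val '' connectedComponent z :=
      hT.ordConnected.uIcc_subset ⟨y, hy, rfl⟩ ⟨z, mem_connectedComponent, rfl⟩ hg1
    obtain ⟨g', _, rfl⟩ := this
    exact hg2 g'.2
  · exact (isPreconnected_C w n).subset_connectedComponent hz

lemma comp_pt0 (w : ℕ+ → Bool) : connectedComponent (pt0 w) = {pt0 w} := by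
  apply Set.Subset.antisymm
  · intro y hy
    rw [Set.mem_singleton_iff]
    by_contra hne
    rcases mem_S_iff.1 y.2 with h0 | ⟨m, hm⟩
    · exact hne (Subtype.ext h0)
    have hT : IsPreconnected (Subtype.val '' connectedComponent (pt0 w)) :=
      isPreconnected_connectedComponent.image _ continuous_subtype_val.continuousOn
    obtain ⟨g, hg1, hg2⟩ :=
      gap_between (p := (pt0 w).1) (q := y.1) (pt0 w).2 (zero_not_mem_I w m) hm
    have : g ∈ Subtype.val '' connectedComponent (pt0 w) :=
      hT.ordConnected.uIcc_subset ⟨pt0 w, mem_connectedComponent, rfl⟩ ⟨y, hy, rfl⟩ hg1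
    obtain ⟨g', _, rfl⟩ := this
    exact hg2 g'.2
  · intro y hy
    rw [Set.mem_singleton_iff] at hy
    subst hy
    exact mem_connectedComponent

noncomputable def ptr (u : ℕ+ → Bool) (n : ℕ+) : ↥(S u) :=
  ⟨cpt n + len u n, I_subset_S u n (right_mem_I u n)⟩

/-- Any Lipschitz constant for an equiv of the spaces is nonnegative; in fact the set of
Lipschitz constants is closed, nonempty and bounded below, so `dil` is attained. -/
lemma dil_spec {u v : ℕ+ → Bool} (g : ↥(S u) ≃ ↥(S v)) (hg : ∃ K : NNReal, LipschitzWith K g) :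
    (∀ x y, dist (g x) (g y) ≤ dil (g : ↥(S u) → ↥(S v)) * dist x y) ∧
      0 < dil (g : ↥(S u) → ↥(S v)) := by
  have hbdd : BddBelow (LSet (g : ↥(S u) → ↥(S v))) := by
    refine ⟨0, fun K hK => ?_⟩
    have h := hK (ptc u 1) (pt0 u)
    rw [dist_ptc_pt0] at h
    have := dist_nonneg (x := g (ptc u 1)) (y := g (pt0 u))
    have := cpt_pos 1
    nlinarith
  have hne : (LSet (g : ↥(S u) → ↥(S v))).Nonempty := by
    obtain ⟨K, hK⟩ := hg
    exact ⟨K, fun x y => hK.dist_le_mul x y⟩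
  have hclosed : IsClosed (LSet (g : ↥(S u) → ↥(S v))) := by
    have : LSet (g : ↥(S u) → ↥(S v)) =
        ⋂ (x : ↥(S u)) (y : ↥(S u)), {K : ℝ | dist (g x) (g y) ≤ K * dist x y} := by
      ext K; simp [LSet, Set.mem_iInter]
    rw [this]
    exact isClosed_iInter fun x => isClosed_iInter fun y =>
      isClosed_le continuous_const (continuous_id.mul continuous_const)
  have hmem : dil (g : ↥(S u) → ↥(S v)) ∈ LSet (g : ↥(S u) → ↥(S v)) :=
    hclosed.csInf_mem hne hbdd
  refine ⟨hmem, ?_⟩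
  have h := hmem (ptc u 1) (pt0 u)
  rw [dist_ptc_pt0] at h
  have hne' : g (ptc u 1) ≠ g (pt0 u) := by
    intro hgeq
    have := g.injective hgeq
    have := congrArg Subtype.val this
    simp only [ptc, pt0] at this
    exact (cpt_pos 1).ne' this
  have hdp : 0 < dist (g (ptc u 1)) (g (pt0 u)) := dist_pos.2 hne'
  have := cpt_pos 1
  nlinarith

lemma sigma_step {u v : ℕ+ → Bool} (g : ↥(S u) ≃ ↥(S v)) {K : ℝ} (hK2 : K < 2)
    (hKL : ∀ x y, dist (g x) (g y) ≤ K * dist x y) (hg0 : g (pt0 u) = pt0 v) (n : ℕ+) :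
    ∃ m, (g (ptc u n)).1 ∈ I v m ∧ n ≤ m := by
  have h0 : (g (ptc u n)).1 ≠ 0 := by
    intro h
    have h1 : g (ptc u n) = pt0 v := Subtype.ext h
    have h2 := g.injective (h1.trans hg0.symm)
    have h3 := congrArg Subtype.val h2
    simp only [ptc, pt0] at h3
    exact (cpt_pos n).ne' h3
  rcases mem_S_iff.1 (g (ptc u n)).2 with h | ⟨m, hm⟩
  · exact absurd h h0
  refine ⟨m, hm, ?_⟩
  have hd := hKL (ptc u n) (pt0 u)
  rw [hg0, dist_ptc_pt0] at hd
  have hw : dist (g (ptc u n)) (pt0 v) = (g (ptc u n)).1 := by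
    rw [Subtype.dist_eq, Real.dist_eq]
    show |(g (ptc u n)).1 - 0| = (g (ptc u n)).1
    rw [sub_zero, abs_of_nonneg (S_nonneg (g (ptc u n)).2)]
  rw [hw] at hd
  by_contra hmn
  push_neg at hmn
  have h2c := two_cpt_le hmn
  have h1 := hm.1
  have := cpt_pos n
  nlinarith

lemma pt0_symm {u v : ℕ+ → Bool} {f : ↥(S u) ≃ ↥(S v)} (hf0 : f (pt0 u) = pt0 v) :
    f.symm (pt0 v) = pt0 u :=
  (Equiv.symm_apply_eq f).2 hf0.symm

lemma sigma_id {u v : ℕ+ → Bool} (f : ↥(S u) ≃ ↥(S v)) {a b : ℝ} (ha2 : a < 2) (hb2 : b < 2)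
    (haL : ∀ x y, dist (f x) (f y) ≤ a * dist x y)
    (hbL : ∀ x y, dist (f.symm x) (f.symm y) ≤ b * dist x y)
    (hf0 : f (pt0 u) = pt0 v) (hsc : Continuous (f.symm : ↥(S v) → ↥(S u))) (n : ℕ+) :
    (f (ptc u n)).1 ∈ I v n := by
  obtain ⟨m, hm, hnm⟩ := sigma_step f ha2 haL hf0 n
  obtain ⟨k, hk, hmk⟩ := sigma_step f.symm hb2 hbL (pt0_symm hf0) m
  have himg := hsc.image_connectedComponent_subset (f (ptc u n))
  rw [Equiv.symm_apply_apply] at himg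
  rw [comp_eq_C (f (ptc u n)) hm, comp_eq_C (ptc u n) (cpt_mem_I u n)] at himg
  have hmem : f.symm (ptc v m) ∈ C u n := himg ⟨ptc v m, cpt_mem_I v m, rfl⟩
  have hkn : k = n := I_unique hk hmem
  have hmn : m = n := le_antisymm (hkn ▸ hmk) hnm
  exact hmn ▸ hm

theorem log_two_le_lipCost {u v : ℕ+ → Bool} (hne : u ≠ v) (f : ↥(S u) ≃ ↥(S v))
    (hbl : IsBiLipschitzEquiv f) : Real.log 2 ≤ lipCost f := by
  by_contra hcon
  push_neg at hcon
  obtain ⟨haL, ha0⟩ := dil_spec f hbl.1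
  obtain ⟨hbL, hb0⟩ := dil_spec f.symm (by simpa using hbl.2)
  set a := dil (f : ↥(S u) → ↥(S v)) with ha
  set b := dil (f.symm : ↥(S v) → ↥(S u)) with hb
  have hcost : |Real.log a| + |Real.log b| < Real.log 2 := hcon
  have ha2 : a < 2 := by
    have h1 : Real.log a < Real.log 2 := lt_of_le_of_lt (le_abs_self _)
      (by have := abs_nonneg (Real.log b); linarith)
    exact (Real.log_lt_log_iff ha0 (by norm_num)).1 h1
  have hb2 : b < 2 := by
    have h1 : Real.log b < Real.log 2 := lt_of_le_of_lt (le_abs_self _)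
      (by have := abs_nonneg (Real.log a); linarith)
    exact (Real.log_lt_log_iff hb0 (by norm_num)).1 h1
  -- continuity
  obtain ⟨Kf, hKf⟩ := hbl.1
  obtain ⟨Kg, hKg⟩ := hbl.2
  have hfc : Continuous (f : ↥(S u) → ↥(S v)) := hKf.continuous
  have hsc : Continuous (f.symm : ↥(S v) → ↥(S u)) := hKg.continuous
  -- f fixes 0
  have hf0 : f (pt0 u) = pt0 v := by
    by_contra hne0
    have h0 : (f (pt0 u)).1 ≠ 0 := fun h => hne0 (Subtype.ext h)
    rcases mem_S_iff.1 (f (pt0 u)).2 with h | ⟨m, hm⟩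
    · exact h0 h
    have himg := hsc.image_connectedComponent_subset (f (pt0 u))
    rw [Equiv.symm_apply_apply] at himg
    rw [comp_eq_C (f (pt0 u)) hm, comp_pt0] at himg
    have e1 : f.symm (ptc v m) ∈ ({pt0 u} : Set ↥(S u)) :=
      himg ⟨ptc v m, cpt_mem_I v m, rfl⟩
    have e2 : f.symm (ptr v m) ∈ ({pt0 u} : Set ↥(S u)) :=
      himg ⟨ptr v m, right_mem_I v m, rfl⟩
    rw [Set.mem_singleton_iff] at e1 e2
    have := f.symm.injective (e1.trans e2.symm)
    have hval := congrArg Subtype.val this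
    simp only [ptc, ptr] at hval
    exact (len_pos v m).ne' (by linarith)
  have hg0 : f.symm (pt0 v) = pt0 u := pt0_symm hf0
  -- f maps the n-th interval to the n-th interval
  have hfn : ∀ n, (f (ptc u n)).1 ∈ I v n := sigma_id f ha2 hb2 haL hbL hf0 hsc
  have hgn : ∀ n, (f.symm (ptc v n)).1 ∈ I u n := by
    intro n
    refine sigma_id f.symm hb2 ha2 hbL ?_ hg0 (by simpa using hfc) n
    simpa using haL
  have hCf : ∀ n, f '' C u n ⊆ C v n := by
    intro n
    have h := hfc.image_connectedComponent_subset (ptc u n)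
    rwa [comp_eq_C (ptc u n) (cpt_mem_I u n), comp_eq_C (f (ptc u n)) (hfn n)] at h
  have hCg : ∀ n, f.symm '' C v n ⊆ C u n := by
    intro n
    have h := hsc.image_connectedComponent_subset (ptc v n)
    rwa [comp_eq_C (ptc v n) (cpt_mem_I v n), comp_eq_C (f.symm (ptc v n)) (hgn n)] at h
  -- distance between endpoint pairs
  have hdist_pt : ∀ (w : ℕ+ → Bool) (n : ℕ+), dist (ptc w n) (ptr w n) = len w n := by
    intro w n
    rw [Subtype.dist_eq, Real.dist_eq]
    show |cpt n - (cpt n + len w n)| = len w n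
    rw [abs_sub_comm]
    rw [show cpt n + len w n - cpt n = len w n by ring, abs_of_pos (len_pos w n)]
  have hIdist : ∀ (w : ℕ+ → Bool) (n : ℕ+) (z z' : ↥(S w)),
      z.1 ∈ I w n → z'.1 ∈ I w n → dist z z' ≤ len w n := by
    intro w n z z' hz hz'
    rw [Subtype.dist_eq, Real.dist_eq, abs_sub_le_iff]
    constructor <;> [linarith [hz.1, hz.2, hz'.1, hz'.2]; linarith [hz.1, hz.2, hz'.1, hz'.2]]
  -- length inequalities
  have hlen1 : ∀ n, len u n ≤ b * len v n := by
    intro n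
    have h1 : (f (ptc u n)).1 ∈ I v n := hCf n ⟨ptc u n, cpt_mem_I u n, rfl⟩
    have h2 : (f (ptr u n)).1 ∈ I v n := hCf n ⟨ptr u n, right_mem_I u n, rfl⟩
    have hd := hbL (f (ptc u n)) (f (ptr u n))
    rw [Equiv.symm_apply_apply, Equiv.symm_apply_apply, hdist_pt u n] at hd
    have := hIdist v n _ _ h1 h2
    nlinarith
  have hlen2 : ∀ n, len v n ≤ a * len u n := by
    intro n
    have h1 : (f.symm (ptc v n)).1 ∈ I u n := hCg n ⟨ptc v n, cpt_mem_I v n, rfl⟩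
    have h2 : (f.symm (ptr v n)).1 ∈ I u n := hCg n ⟨ptr v n, right_mem_I v n, rfl⟩
    have hd := haL (f.symm (ptc v n)) (f.symm (ptr v n))
    rw [Equiv.apply_symm_apply, Equiv.apply_symm_apply, hdist_pt v n] at hd
    have := hIdist u n _ _ h1 h2
    nlinarith
  -- pick a coordinate where u and v differ
  obtain ⟨n, hn⟩ := Function.ne_iff.1 hne
  have hL := len_pos u n
  have hLv := len_pos v n
  have hpow : ∀ k : ℤ, (2:ℝ) ^ (k + 1) = 2 * 2 ^ k := fun k => by
    rw [zpow_add₀ (by norm_num : (2:ℝ) ≠ 0)]; ring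
  have len_false : ∀ (w : ℕ+ → Bool), w n = false → len w n = (2:ℝ) ^ (-(n:ℤ) - 1) := by
    intro w hw; rw [len, exu, hw]; norm_num
  have len_true : ∀ (w : ℕ+ → Bool), w n = true → len w n = (2:ℝ) ^ (-(n:ℤ) - 2) := by
    intro w hw; rw [len, exu, hw]; norm_num
  cases hu : u n with
  | false =>
    have hv : v n = true := by
      cases hv2 : v n
      · exact absurd (by rw [hu, hv2]) hn
      · rfl
    have hlen : len u n = 2 * len v n := by
      rw [len_false u hu, len_true v hv,
        show (-(n:ℤ) - 1) = (-(n:ℤ) - 2) + 1 by ring, hpow]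
    have := hlen1 n
    nlinarith
  | true =>
    have hv : v n = false := by
      cases hv2 : v n
      · rfl
      · exact absurd (by rw [hu, hv2]) hn
    have hlen : len v n = 2 * len u n := by
      rw [len_false v hv, len_true u hu,
        show (-(n:ℤ) - 1) = (-(n:ℤ) - 2) + 1 by ring, hpow]
    have := hlen2 n
    nlinarith

lemma lipDist_ge {u v : ℕ+ → Bool} (hne : u ≠ v) :
    ENNReal.ofReal (Real.log 2) ≤ lipDist ↥(S u) ↥(S v) := by
  rw [lipDist]
  refine le_iInf fun f => le_iInf fun hbl => ?_
  exact ENNReal.ofReal_le_ofReal (log_two_le_lipCost hne f hbl)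

end LipFam

/-- There is a continuum-indexed family of compact metric spaces with pairwise Lipschitz
distance at most `2 log 2` and, for distinct indices, at least `log 2`. -/
theorem exists_discrete_continuum_family :
    ∃ X : (ℕ+ → Bool) → CptMet,
      (∀ u v, lipDist (X u).carrier (X v).carrier ≤ ENNReal.ofReal (2 * Real.log 2)) ∧
      (∀ u v, u ≠ v →
        ENNReal.ofReal (Real.log 2) ≤ lipDist (X u).carrier (X v).carrier) := by
  refine ⟨fun u => @CptMet.mk ↥(LipFam.S u) _
      (isCompact_iff_compactSpace.mp (LipFam.isCompact_S u)),
    fun u v => LipFam.lipDist_le u v, fun u v hne => LipFam.lipDist_ge hne⟩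
end

section
/- The metric space (ℳ_{[0,1]}, d_L) of isometry classes of compact metric spaces at finite Lipschitz distance from the closed unit interval [0,1] is not separable. -/
open ENNReal

/-!
For `t ⊆ ℕ` let `bumps t` be the sum of the parabolic bumps of height `σₙ = 4⁻⁽ⁿ⁺¹⁾` supported
on `[σₙ, 2σₙ]`, `n ∈ t`. It is `4`-Lipschitz, so its graph over `[0, 1]`, with the max metric, is
bi-Lipschitz equivalent to `[0, 1]`. If `k ∈ t`, the `k`-th bump carries an equilateral triangle of
side `σₖ`. If `k ∉ t`, the graph has no triangle with all sides in `[a, b]`, `b < 5a/4`, at scale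
`σₖ`: two of its sides would have to be steep with opposite slopes, so the three points would form
a peak or a valley on a single bump of a much larger scale `σₘ ≥ 4σₖ`. A valley is impossible
because a bump is concave on its support, and a peak is impossible because `bump σₘ + (4/σₘ)p²`
is convex, i.e. the curvature of that bump is too small. A map of small distortion between two
such graphs carries the triangle along, so graphs for different `t` cannot both be `1/100`-close
to the same space; as there are uncountably many `t`, no countable family is dense.
-/

open Real Set Function
open scoped NNReal

section DisjointSupports

variable {ι X : Type*} {f : ι → X → ℝ}

lemma tsum_apply_eq_of_ne_zero (hdisj : Pairwise (Disjoint on fun i ↦ support (f i))) {i : ι}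
    {x : X} (hx : f i x ≠ 0) : ∑' j, f j x = f i x :=
  tsum_eq_single i fun _ hj ↦ notMem_support.1 fun hjx ↦ Set.disjoint_left.1 (hdisj hj) hjx hx

lemma apply_le_tsum_of_disjoint (hf0 : ∀ i x, 0 ≤ f i x)
    (hdisj : Pairwise (Disjoint on fun i ↦ support (f i))) (i : ι) (x : X) :
    f i x ≤ ∑' j, f j x := by
  by_cases hx : f i x = 0
  · rw [hx]; exact tsum_nonneg (hf0 · x)
  · rw [tsum_apply_eq_of_ne_zero hdisj hx]

lemma lipschitzWith_tsum_of_disjoint [PseudoMetricSpace X] {K : ℝ≥0}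
    (hf : ∀ i, LipschitzWith K (f i)) (hf0 : ∀ i x, 0 ≤ f i x)
    (hdisj : Pairwise (Disjoint on fun i ↦ support (f i))) :
    LipschitzWith K fun x ↦ ∑' i, f i x := by
  refine LipschitzWith.of_le_add_mul K fun x y ↦ ?_
  by_cases hx : ∃ i, f i x ≠ 0
  · obtain ⟨i, hi⟩ := hx
    rw [tsum_apply_eq_of_ne_zero hdisj hi]
    exact ((hf i).le_add_mul x y).trans
      (add_le_add_left (apply_le_tsum_of_disjoint hf0 hdisj i y) _)
  · push Not at hx
    simp only [hx, tsum_zero]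
    exact add_nonneg (tsum_nonneg (hf0 · y)) (by positivity)

end DisjointSupports

lemma le_mul_of_convexOn_add_sq {f : ℝ → ℝ} {κ a x y z : ℝ}
    (hf : ConvexOn ℝ univ fun p ↦ f p + κ * p ^ 2) (hxy : x < y) (hyz : y < z)
    (hx : a ≤ f y - f x) (hz : a ≤ f y - f z) : a ≤ κ * ((y - x) * (z - y)) := by
  have hslope := hf.slope_mono_adjacent (mem_univ x) (mem_univ z) hxy hyz
  rw [div_le_div_iff₀ (sub_pos.2 hxy) (sub_pos.2 hyz)] at hslope
  have hxz : 0 < z - x := by linarith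
  refine le_of_mul_le_mul_right ?_ hxz
  nlinarith [mul_le_mul_of_nonneg_right hx (sub_pos.2 hyz).le,
    mul_le_mul_of_nonneg_right hz (sub_pos.2 hxy).le]

noncomputable def bump (b p : ℝ) : ℝ := max 0 (4 * (p - b) * (2 * b - p) / b)

section Bump

variable {b : ℝ}

lemma bump_nonneg (b p : ℝ) : 0 ≤ bump b p := le_max_left _ _

lemma bump_le (hb : 0 < b) (p : ℝ) : bump b p ≤ b :=
  max_le hb.le (by rw [div_le_iff₀ hb]; nlinarith [sq_nonneg (2 * p - 3 * b)])

lemma bump_eq_zero (hb : 0 < b) {p : ℝ} (hp : p ∉ Ioo b (2 * b)) : bump b p = 0 := by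
  refine max_eq_left (div_nonpos_of_nonpos_of_nonneg ?_ hb.le)
  rw [mem_Ioo, not_and_or, not_lt, not_lt] at hp
  rcases hp with hp | hp <;> nlinarith

lemma lipschitzWith_bump (hb : 0 < b) : LipschitzWith 4 (bump b) := by
  refine LipschitzWith.of_le_add_mul 4 fun p r ↦ ?_
  rw [Real.dist_eq, NNReal.coe_ofNat, bump, bump]
  rcases le_or_gt (4 * (p - b) * (2 * b - p) / b) 0 with hp | hp
  · rw [max_eq_left hp]; exact add_nonneg (le_max_left _ _) (by positivity)
  rw [max_eq_right hp.le]
  have hp' : b < p ∧ p < 2 * b := by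
    rw [lt_div_iff₀ hb, zero_mul] at hp
    constructor <;> by_contra! h <;> nlinarith
  rcases lt_or_ge r b with hr | hr
  · calc 4 * (p - b) * (2 * b - p) / b ≤ 4 * |p - r| := by
          rw [div_le_iff₀ hb, abs_of_pos (by linarith)]; nlinarith
      _ ≤ _ := le_add_of_nonneg_left (le_max_left _ _)
  rcases le_or_gt r (2 * b) with hr' | hr'
  · calc 4 * (p - b) * (2 * b - p) / b
          = 4 * (r - b) * (2 * b - r) / b + 4 * (p - r) * (3 * b - p - r) / b := by
          field_simp; ring
      _ ≤ _ := by
          refine add_le_add (le_max_right _ _) ?_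
          rw [div_le_iff₀ hb]
          rcases le_total p r with h | h
          · rw [abs_of_nonpos (by linarith)]; nlinarith
          · rw [abs_of_nonneg (by linarith)]; nlinarith
  · calc 4 * (p - b) * (2 * b - p) / b ≤ 4 * |p - r| := by
          rw [div_le_iff₀ hb, abs_of_neg (by linarith)]; nlinarith
      _ ≤ _ := le_add_of_nonneg_left (le_max_left _ _)

lemma bump_add_sq (hb : 0 < b) (p : ℝ) :
    bump b p + 4 / b * p ^ 2 = max (4 / b * p ^ 2) (12 * p - 8 * b) := by
  rw [bump, max_add, zero_add]
  congr 1
  field_simp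
  ring

lemma convexOn_bump_add_sq (hb : 0 < b) : ConvexOn ℝ univ fun p ↦ bump b p + 4 / b * p ^ 2 := by
  simp_rw [bump_add_sq hb]
  exact (even_two.convexOn_pow.smul (by positivity)).sup
    (((convexOn_id convex_univ).smul (by norm_num : (0:ℝ) ≤ 12)).add (convexOn_const _ convex_univ))

lemma min_le_bump (hb : 0 < b) {x y z : ℝ} (hxy : x ≤ y) (hyz : y ≤ z) :
    min (bump b x) (bump b z) ≤ bump b y := by
  simp only [bump, ← max_min_distrib_left]
  refine max_le_max le_rfl ?_
  rcases le_total (2 * y) (3 * b) with h | h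
  · refine min_le_of_left_le ?_
    rw [div_le_div_iff_of_pos_right hb]; nlinarith
  · refine min_le_of_right_le ?_
    rw [div_le_div_iff_of_pos_right hb]; nlinarith

end Bump

noncomputable def scale (n : ℕ) : ℝ := (1 / 4) ^ (n + 1)

lemma scale_pos (n : ℕ) : 0 < scale n := by unfold scale; positivity

lemma scale_le (n : ℕ) : scale n ≤ 1 / 4 :=
  pow_le_of_le_one (by norm_num) (by norm_num) n.succ_ne_zero

lemma four_mul_scale_le {m n : ℕ} (h : m < n) : 4 * scale n ≤ scale m := by
  have : 4 * scale n = (1 / 4) ^ n := by rw [scale, pow_succ]; ring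
  rw [this, scale]
  exact pow_le_pow_of_le_one (by norm_num) (by norm_num) h

lemma notMem_Ioo_scale {m n : ℕ} (hnm : n ≠ m) {p : ℝ} (hp : p ∈ Icc (scale m / 2) (4 * scale m)) :
    p ∉ Ioo (scale n) (2 * scale n) := by
  rintro ⟨h1, h2⟩
  rcases hnm.lt_or_gt with h | h
  · linarith [four_mul_scale_le h, hp.2]
  · linarith [four_mul_scale_le h, hp.1]

noncomputable def bumps (t : Set ℕ) (p : ℝ) : ℝ := ∑' n : t, bump (scale n) p

section Bumps

variable {t : Set ℕ}

lemma bumps_nonneg (t : Set ℕ) (p : ℝ) : 0 ≤ bumps t p := tsum_nonneg fun _ ↦ bump_nonneg _ _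

lemma bumps_eq_bump {m : ℕ} (hm : m ∈ t) {p : ℝ} (hp : p ∈ Icc (scale m / 2) (4 * scale m)) :
    bumps t p = bump (scale m) p :=
  tsum_eq_single (⟨m, hm⟩ : t) fun n hn ↦
    bump_eq_zero (scale_pos n) (notMem_Ioo_scale (fun h ↦ hn (Subtype.ext h)) hp)

lemma Ioo_subset_Icc_scale (m : ℕ) :
    Ioo (scale m) (2 * scale m) ⊆ Icc (scale m / 2) (4 * scale m) :=
  fun _ hp ↦ ⟨by linarith [hp.1, scale_pos m], by linarith [hp.2, scale_pos m]⟩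

lemma exists_mem_Ioo_of_bumps_ne_zero {p : ℝ} (h : bumps t p ≠ 0) :
    ∃ m ∈ t, p ∈ Ioo (scale m) (2 * scale m) := by
  by_contra! hp
  exact h (by simp [bumps, bump_eq_zero (scale_pos _) (hp _ (Subtype.prop _))])

lemma lipschitzWith_bumps (t : Set ℕ) : LipschitzWith 4 (bumps t) := by
  refine lipschitzWith_tsum_of_disjoint (fun n ↦ lipschitzWith_bump (scale_pos n))
    (fun _ _ ↦ bump_nonneg _ _) fun n n' hnn' ↦ Set.disjoint_left.2 fun p hp hp' ↦ ?_
  have hp'' := Ioo_subset_Icc_scale n' (by_contra fun h ↦ hp' (bump_eq_zero (scale_pos n') h))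
  exact hp (bump_eq_zero (scale_pos n) (notMem_Ioo_scale (fun h ↦ hnn' (Subtype.ext h)) hp''))

end Bumps

def bumpGraph (t : Set ℕ) : Set (ℝ × ℝ) := (Icc 0 1).graphOn (bumps t)

instance (t : Set ℕ) : CompactSpace (bumpGraph t) :=
  isCompact_iff_compactSpace.1 <|
    isCompact_Icc.image (continuous_id.prodMk (lipschitzWith_bumps t).continuous)

noncomputable def bumpGraphEquiv (t : Set ℕ) : Icc (0 : ℝ) 1 ≃ bumpGraph t where
  toFun u := ⟨(u, bumps t u), u, u.2, rfl⟩
  invFun P := ⟨P.1.1, (mem_graphOn.1 P.2).1⟩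
  left_inv _ := rfl
  right_inv P := Subtype.ext (Prod.ext rfl (mem_graphOn.1 P.2).2)

lemma dist_bumpGraphEquiv (t : Set ℕ) (u v : Icc (0 : ℝ) 1) :
    dist (bumpGraphEquiv t u) (bumpGraphEquiv t v) =
      dist ((u : ℝ), bumps t u) ((v : ℝ), bumps t v) :=
  rfl

lemma isBiLipschitzEquiv_bumpGraphEquiv (t : Set ℕ) : IsBiLipschitzEquiv (bumpGraphEquiv t) :=
  ⟨⟨_, ((LipschitzWith.id.prodMk (lipschitzWith_bumps t)).comp
      (LipschitzWith.subtype_val _)).subtype_mk _⟩,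
    ⟨_, (LipschitzWith.prod_fst.comp (LipschitzWith.subtype_val _)).subtype_mk _⟩⟩

def HasTriangle (X : Type*) [PseudoMetricSpace X] (a b : ℝ) : Prop :=
  ∃ x y z : X, dist x y ∈ Icc a b ∧ dist y z ∈ Icc a b ∧ dist x z ∈ Icc a b

lemma HasTriangle.map {X Y : Type*} [PseudoMetricSpace X] [PseudoMetricSpace Y] {a b : ℝ}
    {K : ℝ≥0} {e : X → Y} (hL : LipschitzWith K e) (hA : AntilipschitzWith K e)
    (h : HasTriangle X a b) : HasTriangle Y (a / K) (K * b) := by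
  obtain ⟨x, y, z, hxy, hyz, hxz⟩ := h
  have hmap : ∀ {p q : X}, dist p q ∈ Icc a b → dist (e p) (e q) ∈ Icc (a / K) (K * b) :=
    fun {p q} hpq ↦ ⟨div_le_of_le_mul₀ K.2 dist_nonneg
        ((hpq.1.trans (hA.le_mul_dist p q)).trans_eq (mul_comm _ _)),
      (hL.dist_le_mul p q).trans (mul_le_mul_of_nonneg_left hpq.2 K.2)⟩
  exact ⟨e x, e y, e z, hmap hxy, hmap hyz, hmap hxz⟩

lemma hasTriangle_bumpGraph {s : Set ℕ} {k : ℕ} (hk : k ∈ s) :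
    HasTriangle (bumpGraph s) (scale k) (scale k) := by
  have h0 := scale_pos k
  have h1 := scale_le k
  have hbump : ∀ c ∈ Icc (1 : ℝ) 2, bumps s (c * scale k) = bump (scale k) (c * scale k) :=
    fun c hc ↦ bumps_eq_bump hk ⟨by nlinarith [hc.1], by nlinarith [hc.2]⟩
  have hleft : bumps s (1 * scale k) = 0 := by
    rw [hbump 1 (by norm_num), bump]; simp
  have hmid : bumps s (3 / 2 * scale k) = scale k := by
    have : 4 * (3 / 2 * scale k - scale k) * (2 * scale k - 3 / 2 * scale k) / scale k =
        scale k := by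
      field_simp; ring
    rw [hbump (3 / 2) (by norm_num), bump, this, max_eq_right h0.le]
  have hright : bumps s (2 * scale k) = 0 := by
    rw [hbump 2 (by norm_num), bump]; simp
  let P (c : ℝ) (hc : c ∈ Icc (1 : ℝ) 2) : bumpGraph s :=
    bumpGraphEquiv s ⟨c * scale k, by nlinarith [hc.1], by nlinarith [hc.2]⟩
  refine ⟨P 1 (by norm_num), P (3 / 2) (by norm_num), P 2 (by norm_num), ?_, ?_, ?_⟩ <;>
  · simp only [P, dist_bumpGraphEquiv, Prod.dist_eq, Real.dist_eq, hleft, hmid, hright]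
    rw [mem_Icc, ← le_antisymm_iff, eq_comm]
    ring_nf
    norm_num [abs_mul, abs_of_pos h0, h0.le] <;> linarith

lemma peak_or_valley_of_triangle {g : ℝ → ℝ} (hg : LipschitzWith 4 g) {a b x y z : ℝ}
    (hab : b < 5 / 4 * a) (hxy : x < y) (hyz : y < z) (h1 : a ≤ dist (x, g x) (y, g y))
    (h2 : a ≤ dist (y, g y) (z, g z)) (h3 : dist (x, g x) (z, g z) ≤ b) :
    (a ≤ g y - g x ∧ a ≤ g y - g z) ∨ (a ≤ g x - g y ∧ a ≤ g z - g y) := by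
  have hL : ∀ p q, |g p - g q| ≤ 4 * |p - q| := fun p q ↦ by
    simpa [Real.dist_eq] using hg.dist_le_mul p q
  simp only [Prod.dist_eq, Real.dist_eq, le_max_iff, max_le_iff] at h1 h2 h3
  rw [abs_sub_comm, abs_of_pos (sub_pos.2 hxy)] at h1
  rw [abs_sub_comm y, abs_of_pos (sub_pos.2 hyz)] at h2
  rw [abs_sub_comm x, abs_of_pos (by linarith)] at h3
  obtain ⟨hxz, hgxz⟩ := h3
  have ha : 0 < a := by linarith [abs_nonneg (g x - g z)]
  -- a horizontal side of length `≥ a` leaves less than `a / 4` for the other one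
  have v1 : a ≤ |g x - g y| := h1.resolve_left fun h ↦ by
    rcases h2 with h2 | h2
    · linarith
    · linarith [hL y z, abs_of_neg (by linarith : y - z < 0)]
  have v2 : a ≤ |g y - g z| := h2.resolve_left fun h ↦ by
    rcases h1 with h1 | h1
    · linarith
    · linarith [hL x y, abs_of_neg (by linarith : x - y < 0)]
  rw [abs_le] at hgxz
  rcases le_abs'.1 v1 with v1 | v1 <;> rcases le_abs'.1 v2 with v2 | v2
  · linarith
  · exact Or.inl ⟨by linarith, by linarith⟩
  · exact Or.inr ⟨by linarith, by linarith⟩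
  · linarith

section NoTriangle

variable {t : Set ℕ} {k : ℕ} {a b : ℝ}

lemma exists_bumps_eq_bump_on_Icc (hk : k ∉ t) (ha : scale k / 4 < a) (hb : b ≤ 2 * scale k)
    {x z w : ℝ} (hxz : z - x ≤ b) (hw : w ∈ Icc x z) (hGw : a ≤ bumps t w) :
    ∃ m, 4 * scale k ≤ scale m ∧ ∀ p ∈ Icc x z, bumps t p = bump (scale m) p := by
  have hk0 := scale_pos k
  obtain ⟨m, hm, hwm⟩ := exists_mem_Ioo_of_bumps_ne_zero (by linarith : bumps t w ≠ 0)
  have hmk : m < k := by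
    refine lt_of_le_of_ne (not_lt.1 fun hkm ↦ ?_) (ne_of_mem_of_not_mem hm hk)
    rw [bumps_eq_bump hm (Ioo_subset_Icc_scale m hwm)] at hGw
    linarith [four_mul_scale_le hkm, bump_le (scale_pos m) w]
  have hscale := four_mul_scale_le hmk
  refine ⟨m, hscale, fun p hp ↦ bumps_eq_bump hm ⟨?_, ?_⟩⟩ <;>
    linarith [hp.1, hp.2, hw.1, hw.2, hwm.1, hwm.2]

lemma not_peak_bumps (hk : k ∉ t) (ha : scale k / 4 < a) (hab : b < 2 * a) (hb : b ≤ 2 * scale k)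
    {x y z : ℝ} (hxy : x < y) (hyz : y < z) (hxz : z - x ≤ b)
    (hx : a ≤ bumps t y - bumps t x) (hz : a ≤ bumps t y - bumps t z) : False := by
  obtain ⟨m, hm, heq⟩ := exists_bumps_eq_bump_on_Icc hk ha hb hxz ⟨hxy.le, hyz.le⟩
    (hx.trans (sub_le_self _ (bumps_nonneg t x)))
  rw [heq x ⟨le_rfl, by linarith⟩, heq y ⟨hxy.le, hyz.le⟩] at hx
  rw [heq y ⟨hxy.le, hyz.le⟩, heq z ⟨by linarith, le_rfl⟩] at hz
  have hpeak := le_mul_of_convexOn_add_sq (convexOn_bump_add_sq (scale_pos m)) hxy hyz hx hz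
  have hs := scale_pos m
  rw [div_mul_eq_mul_div, le_div_iff₀ hs] at hpeak
  -- the curvature of a bump at scale `scale m ≥ 4 * scale k` is too small for a peak of height `a`
  nlinarith [sq_nonneg (y - x - (z - y)), scale_pos k]

lemma not_valley_bumps (hk : k ∉ t) (ha : scale k / 4 < a) (hb : b ≤ 2 * scale k)
    {x y z : ℝ} (hxy : x < y) (hyz : y < z) (hxz : z - x ≤ b)
    (hx : a ≤ bumps t x - bumps t y) (hz : a ≤ bumps t z - bumps t y) : False := by
  obtain ⟨m, -, heq⟩ := exists_bumps_eq_bump_on_Icc hk ha hb hxz ⟨le_rfl, by linarith⟩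
    (hx.trans (sub_le_self _ (bumps_nonneg t y)))
  rw [heq x ⟨le_rfl, by linarith⟩, heq y ⟨hxy.le, hyz.le⟩] at hx
  rw [heq y ⟨hxy.le, hyz.le⟩, heq z ⟨by linarith, le_rfl⟩] at hz
  have := min_le_bump (scale_pos m) hxy.le hyz.le
  rcases min_le_iff.1 this with h | h <;> linarith

lemma not_triangle_of_lt (hk : k ∉ t) (ha : scale k / 4 < a) (hab : b < 5 / 4 * a)
    (hb : b ≤ 2 * scale k) {x y z : ℝ} (hxy : x < y) (hyz : y < z)
    (h1 : a ≤ dist (x, bumps t x) (y, bumps t y)) (h2 : a ≤ dist (y, bumps t y) (z, bumps t z))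
    (h3 : dist (x, bumps t x) (z, bumps t z) ≤ b) : False := by
  have hxz : z - x ≤ b := by
    refine le_trans ?_ h3
    rw [Prod.dist_eq, Real.dist_eq, abs_sub_comm]
    exact (le_abs_self _).trans (le_max_left _ _)
  have hb' : b < 2 * a := by linarith [scale_pos k]
  rcases peak_or_valley_of_triangle (lipschitzWith_bumps t) hab hxy hyz h1 h2 h3 with h | h
  · exact not_peak_bumps hk ha hb' hb hxy hyz hxz h.1 h.2
  · exact not_valley_bumps hk ha hb hxy hyz hxz h.1 h.2

theorem not_hasTriangle_bumpGraph (hk : k ∉ t) (ha : scale k / 4 < a) (hab : b < 5 / 4 * a)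
    (hb : b ≤ 2 * scale k) : ¬ HasTriangle (bumpGraph t) a b := by
  rintro ⟨P, Q, R, hPQ, hQR, hPR⟩
  obtain ⟨x, rfl⟩ := (bumpGraphEquiv t).surjective P
  obtain ⟨y, rfl⟩ := (bumpGraphEquiv t).surjective Q
  obtain ⟨z, rfl⟩ := (bumpGraphEquiv t).surjective R
  rw [dist_bumpGraphEquiv] at hPQ hQR hPR
  have ha0 : 0 < a := lt_trans (by linarith [scale_pos k]) ha
  have hne : ∀ {p q : ℝ}, dist (p, bumps t p) (q, bumps t q) ∈ Icc a b → p ≠ q := by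
    rintro p q h rfl
    linarith [h.1, dist_self (p, bumps t p)]
  generalize (x : ℝ) = x at hPQ hPR
  generalize (y : ℝ) = y at hPQ hQR
  generalize (z : ℝ) = z at hQR hPR
  wlog hxy : x < y generalizing x y z
  · exact this y x (by rwa [dist_comm]) z hPR hQR (lt_of_le_of_ne (not_lt.1 hxy) (hne hPQ).symm)
  rcases lt_trichotomy z x with hzx | rfl | hxz
  · exact not_triangle_of_lt hk ha hab hb hzx hxy (by rw [dist_comm]; exact hPR.1) hPQ.1
      (by rw [dist_comm]; exact hQR.2)
  · exact hne hPR rfl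
  rcases lt_trichotomy z y with hzy | rfl | hyz
  · exact not_triangle_of_lt hk ha hab hb hxz hzy hPR.1 (by rw [dist_comm]; exact hQR.1) hPQ.2
  · exact hne hQR rfl
  · exact not_triangle_of_lt hk ha hab hb hxy hyz hPQ.1 hQR.1 hPR.2

end NoTriangle

section LipschitzDistance

variable {X Y : Type*} [MetricSpace X] [MetricSpace Y]

lemma dist_le_dil_mul {f : X → Y} (hf : ∃ K : ℝ≥0, LipschitzWith K f) (x y : X) :
    dist (f x) (f y) ≤ dil f * dist x y := by
  obtain ⟨K, hK⟩ := hf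
  rcases eq_or_ne x y with rfl | hxy
  · simp
  have hpos := dist_pos.2 hxy
  rw [← div_le_iff₀ hpos]
  exact le_csInf ⟨K, hK.dist_le_mul⟩ fun L hL ↦ (div_le_iff₀ hpos).2 (hL x y)

lemma lipschitzWith_exp_of_abs_log_dil_lt {f : X → Y} (hf : ∃ K : ℝ≥0, LipschitzWith K f)
    {δ : ℝ} (h : |log (dil f)| < δ) : LipschitzWith (exp δ).toNNReal f := by
  have hdil : dil f ≤ exp δ := (le_exp_log _).trans (exp_le_exp.2 ((le_abs_self _).trans h.le))
  exact LipschitzWith.of_dist_le' fun x y ↦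
    (dist_le_dil_mul hf x y).trans (mul_le_mul_of_nonneg_right hdil dist_nonneg)

lemma exists_equiv_of_lipDist_lt {δ : ℝ} (h : lipDist X Y < ENNReal.ofReal δ) :
    ∃ f : X ≃ Y, LipschitzWith (exp δ).toNNReal f ∧ LipschitzWith (exp δ).toNNReal f.symm := by
  obtain ⟨f, hf⟩ := iInf_lt_iff.1 h
  obtain ⟨hbi, hcost⟩ := iInf_lt_iff.1 hf
  have hcost : lipCost f < δ := (ENNReal.ofReal_lt_ofReal_iff'.1 hcost).1
  rw [lipCost] at hcost
  exact ⟨f, lipschitzWith_exp_of_abs_log_dil_lt hbi.1 (by linarith [abs_nonneg (log (dil f.symm))]),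
    lipschitzWith_exp_of_abs_log_dil_lt hbi.2 (by linarith [abs_nonneg (log (dil f))])⟩

lemma lipDist_ne_top {f : X ≃ Y} (hf : IsBiLipschitzEquiv f) : lipDist X Y ≠ ⊤ :=
  ne_top_of_le_ne_top ENNReal.ofReal_ne_top (iInf₂_le f hf)

end LipschitzDistance

theorem false_of_lipDist_bumpGraph_lt {s t : Set ℕ} {k : ℕ} (hs : k ∈ s) (ht : k ∉ t)
    {Y : Type*} [MetricSpace Y] (hsY : lipDist (bumpGraph s) Y < ENNReal.ofReal (1 / 100))
    (htY : lipDist (bumpGraph t) Y < ENNReal.ofReal (1 / 100)) : False := by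
  obtain ⟨f, hf, hf'⟩ := exists_equiv_of_lipDist_lt hsY
  obtain ⟨g, hg, hg'⟩ := exists_equiv_of_lipDist_lt htY
  have hL := hg'.comp hf
  have hA := (hg.to_rightInverse g.right_inv).comp (hf'.to_rightInverse f.left_inv)
  have hK : (((exp (1 / 100)).toNNReal * (exp (1 / 100)).toNNReal : ℝ≥0) : ℝ) = exp (1 / 50) := by
    rw [NNReal.coe_mul, Real.coe_toNNReal _ (exp_pos _).le, ← exp_add]; norm_num
  have hK1 : 1 ≤ exp (1 / 50) := one_le_exp (by norm_num)
  have hK2 : exp (1 / 50) < 50 / 49 := by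
    have := exp_bound_div_one_sub_of_interval' (x := 1 / 50) (by norm_num) (by norm_num)
    norm_num at this ⊢; linarith
  have hk := scale_pos k
  refine not_hasTriangle_bumpGraph ht ?_ ?_ ?_ ((hasTriangle_bumpGraph hs).map hL hA) <;> rw [hK]
  · rw [div_lt_div_iff_of_pos_left hk (by norm_num) (by positivity)]; linarith
  · have hK3 : exp (1 / 50) * exp (1 / 50) < 5 / 4 := by nlinarith
    rw [mul_div_assoc', lt_div_iff₀ (by positivity)]
    nlinarith [mul_lt_mul_of_pos_right hK3 hk]
  · nlinarith

/-- The space of isometry classes of compact metric spaces at finite Lipschitz distance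
from `[0,1]` is not separable: no countable family in it is `d_L`-dense. -/
theorem MI_not_separable :
    ¬ ∃ D : ℕ → CptMet,
      (∀ n, lipDist ↥(Set.Icc (0:ℝ) 1) (D n).carrier ≠ ⊤) ∧
      (∀ Y : CptMet, lipDist ↥(Set.Icc (0:ℝ) 1) Y.carrier ≠ ⊤ →
        ∀ ε : ℝ≥0∞, 0 < ε → ∃ n, lipDist Y.carrier (D n).carrier < ε) := by
  rintro ⟨D, -, hD⟩
  have hclose : ∀ s : Set ℕ, ∃ n, lipDist (bumpGraph s) (D n).carrier < ENNReal.ofReal (1 / 100) :=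
    fun s ↦ hD ⟨bumpGraph s⟩ (lipDist_ne_top (isBiLipschitzEquiv_bumpGraphEquiv s)) _
      (ENNReal.ofReal_pos.2 (by norm_num))
  choose N hN using hclose
  obtain ⟨s, t, hNst, hst⟩ := not_injective_iff.1 (cantor_injective N)
  obtain ⟨k, hk⟩ : ∃ k, ¬(k ∈ s ↔ k ∈ t) := not_forall.1 (mt Set.ext hst)
  by_cases hks : k ∈ s
  · exact false_of_lipDist_bumpGraph_lt hks (fun hkt ↦ hk (iff_of_true hks hkt)) (hN s)
      (hNst ▸ hN t)
  · exact false_of_lipDist_bumpGraph_lt (not_not.1 fun hkt ↦ hk (iff_of_false hks hkt)) hks (hN t)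
      (hNst ▸ hN s)
end
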